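/- arXiv:1312.0755 — 4 statements merged into one kernel-verified Lean document; each statement's English description precedes it below -/
import Mathlib

section
/- Let T ∈ (0,∞], u : [0,T] → [0,∞) with ∫₀ᵀ u(t) dt < ∞, and φ : [0,∞) → [0,∞) continuous with φ(x) ≤ a x + b for nonnegative constants a, b. Then for each δ ≥ 0 the DBDE y_t = δ + ∫ₜᵀ u(s) φ(y_s) ds has a bounded continuous solution on [0,T]. -/
open MeasureTheory Filter Topology
open scoped ENNReal

/-- The interval `[0,T]` where `T ∈ (0,∞]` (i.e. `[0,∞)` if `T = ∞`). -/
def dbInterval (T : ℝ≥0∞) : Set ℝ := {t : ℝ | 0 ≤ t ∧ ENNReal.ofReal t ≤ T}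

/-- The tail interval `[t,T]`. -/
def dbTail (T : ℝ≥0∞) (t : ℝ) : Set ℝ := {s : ℝ | t ≤ s ∧ ENNReal.ofReal s ≤ T}

namespace DBDE

lemma gronwallBound_mono {δ K ε : ℝ} (hδ : 0 ≤ δ) (hK : 0 ≤ K) (hε : 0 ≤ ε) :
    Monotone (gronwallBound δ K ε) := by
  intro x y hxy
  unfold gronwallBound
  split_ifs with h
  · nlinarith
  · have hK' : 0 < K := lt_of_le_of_ne hK (Ne.symm h)
    have h1 : Real.exp (K * x) ≤ Real.exp (K * y) := by
      apply Real.exp_le_exp.2; nlinarith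
    have h2 : 0 ≤ ε / K := div_nonneg hε hK
    nlinarith

/-- Existence of a solution to the autonomous ODE `g' = φ'(g)`, `g 0 = δ`, in integral form,
when `φ'` is continuous, nonnegative, positive on `[δ, x₁)` and vanishes at `x₁`. -/
theorem ode_exists (φ' : ℝ → ℝ) (hc : Continuous φ') (hnn : ∀ x, 0 ≤ φ' x)
    (δ x₁ : ℝ) (hδx : δ < x₁) (hz : φ' x₁ = 0)
    (hpos : ∀ x, δ ≤ x → x < x₁ → 0 < φ' x) :
    ∃ g : ℝ → ℝ, Continuous g ∧ Monotone g ∧ (∀ v, δ ≤ g v ∧ g v ≤ x₁) ∧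
      ∀ v, 0 ≤ v → g v = δ + ∫ w in (0:ℝ)..v, φ' (g w) := by
  classical
  set ψ : ℝ → ℝ := fun w => (φ' (max w δ))⁻¹ with hψdef
  have hmaxlt : ∀ w : ℝ, w < x₁ → max w δ < x₁ := fun w hw => max_lt hw hδx
  have hψpos : ∀ w : ℝ, w < x₁ → 0 < ψ w := fun w hw =>
    inv_pos.2 (hpos _ (le_max_right _ _) (hmaxlt w hw))
  have hψca : ∀ w : ℝ, w < x₁ → ContinuousAt ψ w := by
    intro w hw
    have h1 : ContinuousAt (fun w : ℝ => φ' (max w δ)) w :=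
      (hc.comp (continuous_id.max continuous_const)).continuousAt
    exact h1.inv₀ (ne_of_gt (hpos _ (le_max_right _ _) (hmaxlt w hw)))
  have hψm : AEStronglyMeasurable ψ volume :=
    ((hc.measurable.comp (measurable_id.max measurable_const)).inv).aestronglyMeasurable
  have hψint : ∀ x : ℝ, x < x₁ → IntervalIntegrable ψ volume δ x := by
    intro x hx
    apply ContinuousOn.intervalIntegrable
    intro w hw
    rcases Set.mem_uIcc.1 hw with h | h
    · exact (hψca w (lt_of_le_of_lt h.2 hx)).continuousWithinAt
    · exact (hψca w (lt_of_le_of_lt h.2 hδx)).continuousWithinAt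
  set Ψ : ℝ → ℝ := fun x => ∫ w in δ..x, ψ w with hΨdef
  have hΨd : ∀ x : ℝ, x < x₁ → HasDerivAt Ψ (ψ x) x := by
    intro x hx
    exact intervalIntegral.integral_hasDerivAt_right (hψint x hx)
      ⟨Set.univ, Filter.univ_mem, hψm.restrict⟩ (hψca x hx)
  have hΨc : ContinuousOn Ψ (Set.Iio x₁) := fun x hx =>
    (hΨd x hx).continuousAt.continuousWithinAt
  have hΨsm : StrictMonoOn Ψ (Set.Iio x₁) := by
    apply strictMonoOn_of_deriv_pos (convex_Iio x₁) hΨc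
    intro x hx
    rw [interior_Iio] at hx
    rw [(hΨd x hx).deriv]
    exact hψpos x hx
  have hΨ0 : Ψ δ = 0 := intervalIntegral.integral_same
  set A : ℝ → Set ℝ := fun v => {x | x ≤ δ ∨ (x < x₁ ∧ Ψ x ≤ v)} with hAdef
  have hAne : ∀ v, (A v).Nonempty := fun v => ⟨δ, Or.inl le_rfl⟩
  have hAub : ∀ v, x₁ ∈ upperBounds (A v) := by
    intro v x hx
    rcases hx with h | h
    · exact h.trans hδx.le
    · exact h.1.le
  have hAbdd : ∀ v, BddAbove (A v) := fun v => ⟨x₁, hAub v⟩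
  set g : ℝ → ℝ := fun v => sSup (A v) with hgdef
  have hgm : Monotone g := by
    intro v v' hvv'
    apply csSup_le_csSup (hAbdd v') (hAne v)
    rintro x (h | h)
    · exact Or.inl h
    · exact Or.inr ⟨h.1, h.2.trans hvv'⟩
  have hgeδ : ∀ v, δ ≤ g v := fun v => le_csSup (hAbdd v) (Or.inl le_rfl)
  have hglex₁ : ∀ v, g v ≤ x₁ := fun v => csSup_le (hAne v) (hAub v)
  have hC1 : ∀ x, δ ≤ x → x < x₁ → g (Ψ x) = x := by
    intro x hx1 hx2
    apply le_antisymm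
    · apply csSup_le (hAne _)
      rintro z (hz | ⟨hz1, hz2⟩)
      · exact hz.trans hx1
      · by_contra hlt
        push_neg at hlt
        exact absurd (hΨsm (Set.mem_Iio.2 hx2) (Set.mem_Iio.2 hz1) hlt) (not_lt.2 hz2)
    · exact le_csSup (hAbdd _) (Or.inr ⟨hx2, le_rfl⟩)
  have hg0 : g 0 = δ := by
    have := hC1 δ le_rfl hδx
    rwa [hΨ0] at this
  have hCb : ∀ v : ℝ, (∀ x, δ ≤ x → x < x₁ → Ψ x ≤ v) → g v = x₁ := by
    intro v hv
    apply le_antisymm (hglex₁ v)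
    have hsub : Set.Iio x₁ ⊆ A v := by
      intro x hx
      rcases le_total x δ with h | h
      · exact Or.inl h
      · exact Or.inr ⟨hx, hv x h hx⟩
    calc x₁ = sSup (Set.Iio x₁) := csSup_Iio.symm
      _ ≤ g v := csSup_le_csSup (hAbdd v) ⟨δ, hδx⟩ hsub
  have hCa : ∀ v : ℝ, 0 ≤ v → g v < x₁ → Ψ (g v) = v := by
    intro v hv hlt
    have hex : ∃ x, δ ≤ x ∧ x < x₁ ∧ v < Ψ x := by
      by_contra hno
      push_neg at hno
      exact absurd (hCb v hno) hlt.ne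
    obtain ⟨x, hx1, hx2, hx3⟩ := hex
    have hIcc : Set.Icc δ x ⊆ Set.Iio x₁ := fun w hw => Set.mem_Iio.2 (lt_of_le_of_lt hw.2 hx2)
    have hivt := intermediate_value_Icc hx1 (hΨc.mono hIcc)
    have hvmem : v ∈ Set.Icc (Ψ δ) (Ψ x) := by rw [hΨ0]; exact ⟨hv, hx3.le⟩
    obtain ⟨x₀, hx₀mem, hx₀⟩ := hivt hvmem
    rw [← hx₀, hC1 x₀ hx₀mem.1 (lt_of_le_of_lt hx₀mem.2 hx2)]
  have hgneg : ∀ v : ℝ, v < 0 → g v = δ := by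
    intro v hv
    apply le_antisymm _ (hgeδ v)
    apply csSup_le (hAne v)
    rintro z (hz | ⟨hz1, hz2⟩)
    · exact hz
    · by_contra hcon
      push_neg at hcon
      have h0 : 0 < Ψ z := by
        rw [← hΨ0]
        exact hΨsm (Set.mem_Iio.2 hδx) (Set.mem_Iio.2 hz1) hcon
      linarith
  have hgc : Continuous g := by
    rw [continuous_iff_continuousAt]
    intro v₀
    rw [Metric.continuousAt_iff]
    intro ε hε
    obtain ⟨vp, hvp, hgvp⟩ : ∃ vp, v₀ < vp ∧ g vp < g v₀ + ε := by
      rcases lt_or_ge (g v₀) x₁ with hL | hL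
      · obtain ⟨x, hx1, hx2⟩ := exists_between (lt_min (lt_add_of_pos_right _ hε) hL)
        have hxδ : δ ≤ x := (hgeδ v₀).trans hx1.le
        have hxx₁ : x < x₁ := lt_of_lt_of_le hx2 (min_le_right _ _)
        refine ⟨Ψ x, ?_, ?_⟩
        · by_contra hcon
          push_neg at hcon
          have h2 : g (Ψ x) ≤ g v₀ := hgm hcon
          rw [hC1 x hxδ hxx₁] at h2
          exact absurd hx1 (not_lt.2 h2)
        · rw [hC1 x hxδ hxx₁]
          exact lt_of_lt_of_le hx2 (min_le_left _ _)
      · refine ⟨v₀ + 1, by linarith, ?_⟩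
        have h1 : g v₀ = x₁ := le_antisymm (hglex₁ v₀) hL
        have h2 := hglex₁ (v₀ + 1)
        linarith
    obtain ⟨vm, hvm, hgvm⟩ : ∃ vm, vm < v₀ ∧ g v₀ - ε < g vm := by
      rcases lt_or_ge δ (g v₀) with hL | hL
      · obtain ⟨x, hx1, hx2⟩ := exists_between (max_lt (sub_lt_self _ hε) hL)
        have hxδ : δ ≤ x := ((le_max_right _ _).trans hx1.le)
        have hxx₁ : x < x₁ := lt_of_lt_of_le hx2 (hglex₁ v₀)
        refine ⟨Ψ x, ?_, ?_⟩
        · by_contra hcon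
          push_neg at hcon
          have h2 : g v₀ ≤ g (Ψ x) := hgm hcon
          rw [hC1 x hxδ hxx₁] at h2
          exact absurd hx2 (not_lt.2 h2)
        · rw [hC1 x hxδ hxx₁]
          exact lt_of_le_of_lt (le_max_left _ _) hx1
      · refine ⟨v₀ - 1, by linarith, ?_⟩
        have := hgeδ (v₀ - 1)
        linarith
    refine ⟨min (vp - v₀) (v₀ - vm), lt_min (by linarith) (by linarith), ?_⟩
    intro v hv
    rw [Real.dist_eq] at hv ⊢
    have h1 : |v - v₀| < vp - v₀ := lt_of_lt_of_le hv (min_le_left _ _)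
    have h2 : |v - v₀| < v₀ - vm := lt_of_lt_of_le hv (min_le_right _ _)
    rw [abs_lt] at h1 h2
    have h3 : g v ≤ g vp := hgm (by linarith)
    have h4 : g vm ≤ g v := hgm (by linarith)
    rw [abs_lt]
    constructor <;> linarith
  have hD : ∀ v : ℝ, 0 < v → g v < x₁ → HasDerivAt g (φ' (g v)) v := by
    intro v hv hlt
    have hone : ∀ᶠ y in 𝓝 v, Ψ (g y) = y := by
      have h1 : ∀ᶠ y in 𝓝 v, g y < x₁ :=
        hgc.continuousAt.eventually_mem (isOpen_Iio.mem_nhds hlt)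
      have h2 : ∀ᶠ y in 𝓝 v, 0 < y := eventually_gt_nhds hv
      filter_upwards [h1, h2] with y hy1 hy2
      exact hCa y hy2.le hy1
    have hΨdv : HasDerivAt Ψ (ψ (g v)) (g v) := hΨd _ hlt
    have hinv := HasDerivAt.of_local_left_inverse hgc.continuousAt hΨdv
      (ne_of_gt (hψpos _ hlt)) hone
    have heq : (ψ (g v))⁻¹ = φ' (g v) := by
      simp only [hψdef]
      rw [inv_inv, max_eq_left (hgeδ v)]
    rwa [heq] at hinv
  have hφgc : Continuous fun w => φ' (g w) := hc.comp hgc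
  have hFTC : ∀ v : ℝ, 0 ≤ v → (∀ w, 0 < w → w < v → g w < x₁) →
      ∫ w in (0:ℝ)..v, φ' (g w) = g v - δ := by
    intro v hv hint
    rw [← hg0]
    exact intervalIntegral.integral_eq_sub_of_hasDeriv_right_of_le hv
      hgc.continuousOn (fun w hw => (hD w hw.1 (hint w hw.1 hw.2)).hasDerivWithinAt)
      (hφgc.intervalIntegrable _ _)
  refine ⟨g, hgc, hgm, fun v => ⟨hgeδ v, hglex₁ v⟩, ?_⟩
  intro v hv
  rcases lt_or_eq_of_le (hglex₁ v) with hlt | heq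
  · rw [hFTC v hv (fun w _ hw2 => lt_of_le_of_lt (hgm hw2.le) hlt)]
    ring
  · set Vs : Set ℝ := {w | g w = x₁} with hVsdef
    have hVsmem : v ∈ Vs := heq
    have hVslb : (0:ℝ) ∈ lowerBounds Vs := by
      intro w hw
      by_contra hcon
      push_neg at hcon
      have hw' : g w = x₁ := hw
      rw [hgneg w hcon] at hw'
      exact absurd hw' hδx.ne
    have hVsbdd : BddBelow Vs := ⟨0, hVslb⟩
    have hVsclosed : IsClosed Vs := isClosed_eq hgc continuous_const
    set V := sInf Vs with hVdef
    have hVmem : g V = x₁ := hVsclosed.csInf_mem ⟨v, hVsmem⟩ hVsbdd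
    have hV0 : 0 ≤ V := le_csInf ⟨v, hVsmem⟩ (fun w hw => hVslb hw)
    have hVv : V ≤ v := csInf_le hVsbdd hVsmem
    have h2 : ∫ w in V..v, φ' (g w) = 0 := by
      have heqon : Set.EqOn (fun w => φ' (g w)) (fun _ => (0:ℝ)) (Set.uIcc V v) := by
        intro w hw
        rw [Set.uIcc_of_le hVv] at hw
        have hgw : g w = x₁ := le_antisymm (hglex₁ w) (hVmem ▸ hgm hw.1)
        simp [hgw, hz]
      rw [intervalIntegral.integral_congr heqon]
      simp
    have h1 : ∫ w in (0:ℝ)..V, φ' (g w) = g V - δ := by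
      apply hFTC V hV0
      intro w _ hw2
      rcases lt_or_eq_of_le (hglex₁ w) with h | h
      · exact h
      · exact absurd (csInf_le hVsbdd h) (not_le.2 hw2)
    rw [← intervalIntegral.integral_add_adjacent_intervals
      (hφgc.intervalIntegrable 0 V) (hφgc.intervalIntegrable V v), h1, h2, hVmem, heq]
    ring

set_option maxHeartbeats 1000000 in
/-- Change of variables for the "tail primitive" of a nonneg integrable function, on an
interval, proved by approximation with continuous functions. -/
theorem subst_interval (u' : ℝ → ℝ) (hui : Integrable u') (hu0 : ∀ x, 0 ≤ u' x)
    (h : ℝ → ℝ) (hh : Continuous h) (c d e : ℝ) (hcd : c ≤ d) :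
    ∫ s in c..d, u' s * h ((∫ x in s..d, u' x) + e)
      = ∫ w in e..((∫ x in c..d, u' x) + e), h w := by
  set I : ℝ := ∫ x in c..d, u' x with hIdef
  have hI0 : 0 ≤ I := intervalIntegral.integral_nonneg hcd (fun x _ => hu0 x)
  set F : ℝ → ℝ := fun s => (∫ x in s..d, u' x) + e with hFdef
  have hFcont : Continuous F := by
    have h1 : Continuous fun s => ∫ x in d..s, u' x := hui.continuous_primitive d
    have h2 : F = fun s => -(∫ x in d..s, u' x) + e := by
      funext s
      rw [hFdef]
      simp only []
      rw [intervalIntegral.integral_symm d s]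
    rw [h2]
    exact (h1.neg).add continuous_const
  have hFmem : ∀ s, c ≤ s → s ≤ d → e ≤ F s ∧ F s ≤ e + I := by
    intro s hcs hsd
    have hnn1 : 0 ≤ ∫ x in s..d, u' x := intervalIntegral.integral_nonneg hsd (fun x _ => hu0 x)
    have hsplit : (∫ x in c..s, u' x) + (∫ x in s..d, u' x) = I :=
      intervalIntegral.integral_add_adjacent_intervals hui.intervalIntegrable
        hui.intervalIntegrable
    have hnn2 : 0 ≤ ∫ x in c..s, u' x := intervalIntegral.integral_nonneg hcs (fun x _ => hu0 x)
    constructor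
    · simp only [hFdef]; linarith
    · simp only [hFdef]; linarith
  set J : Set ℝ := Set.Icc (e - 1) (e + I + 1) with hJdef
  obtain ⟨C0, hC0⟩ :=
    (isCompact_Icc (a := e - 1) (b := e + I + 1)).exists_bound_of_continuousOn hh.continuousOn
  set Hb : ℝ := max C0 0 with hHbdef
  have hHb : ∀ x ∈ J, |h x| ≤ Hb := fun x hx => (hC0 x hx).trans (le_max_left _ _)
  have hHb0 : (0:ℝ) ≤ Hb := le_max_right _ _
  have hUC := (isCompact_Icc (a := e - 1) (b := e + I + 1)).uniformContinuousOn_of_continuous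
      hh.continuousOn
  rw [Metric.uniformContinuousOn_iff] at hUC
  show (∫ s in c..d, u' s * h (F s)) = ∫ w in e..(F c), h w
  have key : ∀ θ : ℝ, 0 < θ →
      |(∫ s in c..d, u' s * h (F s)) - ∫ w in e..(F c), h w| ≤ θ := by
    intro θ hθ
    set η : ℝ := θ / (2 * (I + 1)) with hηdef
    have hη : 0 < η := by positivity
    obtain ⟨ρ, hρ, hρ'⟩ := hUC η hη
    set ε : ℝ := min 1 (min (ρ / 2) (θ / (4 * (Hb + 1)))) with hεdef
    have hε : 0 < ε := lt_min one_pos (lt_min (by linarith) (by positivity))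
    have hε1 : ε ≤ 1 := min_le_left _ _
    have hερ : ε ≤ ρ / 2 := (min_le_right _ _).trans (min_le_left _ _)
    have hεθ : ε ≤ θ / (4 * (Hb + 1)) := (min_le_right _ _).trans (min_le_right _ _)
    obtain ⟨v, hvsupp, hvl1, hvcont, hvint⟩ := hui.exists_hasCompactSupport_integral_sub_le hε
    set p : ℝ → ℝ := fun x => max (v x) 0 with hpdef
    have hpc : Continuous p := hvcont.max continuous_const
    have hpint : Integrable p := hvint.pos_part
    have hp0 : ∀ x, 0 ≤ p x := fun x => le_max_right _ _
    have hl1 : ∫ x, |u' x - p x| ≤ ε := by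
      have hptle : ∀ x, |u' x - p x| ≤ ‖u' x - v x‖ := by
        intro x
        rw [Real.norm_eq_abs]
        rcases le_total (v x) 0 with hv0 | hv0
        · have hp' : p x = 0 := by simp only [hpdef]; exact max_eq_right hv0
          rw [hp', sub_zero, abs_of_nonneg (hu0 x),
            abs_of_nonneg (by linarith [hu0 x] : 0 ≤ u' x - v x)]
          linarith
        · have hp' : p x = v x := by simp only [hpdef]; exact max_eq_left hv0
          rw [hp']
      calc ∫ x, |u' x - p x| ≤ ∫ x, ‖u' x - v x‖ :=
            integral_mono ((hui.sub hpint).abs) ((hui.sub hvint).norm) hptle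
        _ ≤ ε := hvl1
    set Fp : ℝ → ℝ := fun s => -(∫ x in d..s, p x) + e with hFpdef
    have hFpc : Continuous Fp := ((hpint.continuous_primitive d).neg).add continuous_const
    have hFpd : ∀ s, HasDerivAt Fp (-p s) s := by
      intro s
      have h1 : HasDerivAt (fun s => ∫ x in d..s, p x) (p s) s :=
        intervalIntegral.integral_hasDerivAt_right hpint.intervalIntegrable
          ⟨Set.univ, Filter.univ_mem, hpc.aestronglyMeasurable.restrict⟩ hpc.continuousAt
      exact h1.neg.add_const e
    have hFps : ∀ s, Fp s = (∫ x in s..d, p x) + e := by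
      intro s
      rw [intervalIntegral.integral_symm d s]
    have hFpd0 : Fp d = e := by
      simp only [hFpdef, intervalIntegral.integral_same, neg_zero, zero_add]
    have hsub := intervalIntegral.integral_comp_smul_deriv (a := c) (b := d)
      (f := Fp) (f' := fun x => -p x) (g := h)
      (fun x _ => hFpd x) (hpc.neg.continuousOn) hh
    have hsub' : (∫ x in c..d, p x * h (Fp x)) = ∫ w in e..(Fp c), h w := by
      have h2 : (∫ x in c..d, p x * h (Fp x)) = -∫ x in Fp c..Fp d, h x := by
        rw [← hsub, ← intervalIntegral.integral_neg]
        apply intervalIntegral.integral_congr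
        intro x _
        simp [Function.comp]
      rw [h2, hFpd0, intervalIntegral.integral_symm e (Fp c), neg_neg]
    have hclose : ∀ s, s ≤ d → |Fp s - F s| ≤ ε := by
      intro s hsd
      have h1 : Fp s - F s = ∫ x in s..d, (p x - u' x) := by
        rw [hFps s]
        simp only [hFdef]
        rw [intervalIntegral.integral_sub hpint.intervalIntegrable hui.intervalIntegrable]
        ring
      rw [h1]
      calc |∫ x in s..d, (p x - u' x)| ≤ ∫ x in s..d, |p x - u' x| :=
            intervalIntegral.abs_integral_le_integral_abs hsd
        _ ≤ ∫ x, |p x - u' x| := by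
            rw [intervalIntegral.integral_of_le hsd]
            exact setIntegral_le_integral ((hpint.sub hui).abs)
              (Eventually.of_forall fun x => abs_nonneg _)
        _ ≤ ε := by
            calc (∫ x, |p x - u' x|) = ∫ x, |u' x - p x| := by
                  congr 1; funext x; rw [abs_sub_comm]
              _ ≤ ε := hl1
    have hFJ : ∀ s, c ≤ s → s ≤ d → F s ∈ J := by
      intro s h1' h2'
      obtain ⟨ha', hb'⟩ := hFmem s h1' h2'
      exact ⟨by linarith, by linarith⟩
    have hFpJ : ∀ s, c ≤ s → s ≤ d → Fp s ∈ J := by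
      intro s h1' h2'
      obtain ⟨ha', hb'⟩ := hFmem s h1' h2'
      have h3' := hclose s h2'
      rw [abs_le] at h3'
      exact ⟨by linarith, by linarith⟩
    have hint1 : IntervalIntegrable (fun s => u' s * h (F s)) volume c d :=
      hui.intervalIntegrable.mul_continuousOn ((hh.comp hFcont).continuousOn)
    have hint2 : IntervalIntegrable (fun s => p s * h (Fp s)) volume c d :=
      hpint.intervalIntegrable.mul_continuousOn ((hh.comp hFpc).continuousOn)
    have hbound1 : ∀ s ∈ Set.Icc c d,
        |u' s * h (F s) - p s * h (Fp s)| ≤ |u' s - p s| * Hb + u' s * η := by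
      intro s hs
      have hFm := hFJ s hs.1 hs.2
      have hFpm := hFpJ s hs.1 hs.2
      have h1 : |h (Fp s)| ≤ Hb := hHb _ hFpm
      have h2 : |h (F s) - h (Fp s)| ≤ η := by
        have hdd : dist (F s) (Fp s) < ρ := by
          rw [Real.dist_eq]
          have h3' := hclose s hs.2
          rw [abs_sub_comm] at h3'
          linarith
        have hd := hρ' (F s) hFm (Fp s) hFpm hdd
        rw [Real.dist_eq] at hd
        exact le_of_lt hd
      have decomp : u' s * h (F s) - p s * h (Fp s)
          = (u' s - p s) * h (Fp s) + u' s * (h (F s) - h (Fp s)) := by ring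
      rw [decomp]
      calc |(u' s - p s) * h (Fp s) + u' s * (h (F s) - h (Fp s))|
          ≤ |(u' s - p s) * h (Fp s)| + |u' s * (h (F s) - h (Fp s))| := abs_add_le _ _
        _ = |u' s - p s| * |h (Fp s)| + u' s * |h (F s) - h (Fp s)| := by
            rw [abs_mul, abs_mul, abs_of_nonneg (hu0 s)]
        _ ≤ |u' s - p s| * Hb + u' s * η := by
            have h4 := abs_nonneg (u' s - p s)
            have h5 := hu0 s
            have h6 := abs_nonneg (h (F s) - h (Fp s))
            nlinarith
    have hl1' : ∫ s in c..d, |u' s - p s| ≤ ε := by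
      rw [intervalIntegral.integral_of_le hcd]
      exact (setIntegral_le_integral ((hui.sub hpint).abs)
        (Eventually.of_forall fun x => abs_nonneg _)).trans hl1
    have hT1 : |(∫ s in c..d, u' s * h (F s)) - ∫ s in c..d, p s * h (Fp s)|
        ≤ Hb * ε + η * I := by
      rw [← intervalIntegral.integral_sub hint1 hint2]
      have habs : |∫ s in c..d, (u' s * h (F s) - p s * h (Fp s))|
          ≤ ∫ s in c..d, |u' s * h (F s) - p s * h (Fp s)| :=
        intervalIntegral.abs_integral_le_integral_abs hcd
      have habsint : IntervalIntegrable (fun s => |u' s - p s|) volume c d := by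
        have := (hui.sub hpint).abs.intervalIntegrable (a := c) (b := d) (μ := volume)
        simpa [Pi.sub_apply] using this
      have hintb : IntervalIntegrable (fun s => |u' s - p s| * Hb + u' s * η) volume c d :=
        (habsint.mul_const Hb).add (hui.intervalIntegrable.mul_const η)
      have hmono : ∫ s in c..d, |u' s * h (F s) - p s * h (Fp s)|
          ≤ ∫ s in c..d, (|u' s - p s| * Hb + u' s * η) :=
        intervalIntegral.integral_mono_on hcd ((hint1.sub hint2).abs) hintb hbound1
      have hval : ∫ s in c..d, (|u' s - p s| * Hb + u' s * η)
          = (∫ s in c..d, |u' s - p s|) * Hb + I * η := by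
        rw [intervalIntegral.integral_add (habsint.mul_const Hb)
          (hui.intervalIntegrable.mul_const η),
          intervalIntegral.integral_mul_const, intervalIntegral.integral_mul_const]
      have hfin : (∫ s in c..d, |u' s - p s|) * Hb ≤ ε * Hb :=
        mul_le_mul_of_nonneg_right hl1' hHb0
      calc |∫ s in c..d, (u' s * h (F s) - p s * h (Fp s))|
          ≤ ∫ s in c..d, |u' s * h (F s) - p s * h (Fp s)| := habs
        _ ≤ (∫ s in c..d, |u' s - p s|) * Hb + I * η := by rw [← hval]; exact hmono
        _ ≤ Hb * ε + η * I := by nlinarith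
    have hT2 : |(∫ w in e..(Fp c), h w) - ∫ w in e..(F c), h w| ≤ Hb * ε := by
      have hdiff : (∫ w in e..(Fp c), h w) - ∫ w in e..(F c), h w
          = ∫ w in (F c)..(Fp c), h w :=
        intervalIntegral.integral_interval_sub_left (hh.intervalIntegrable _ _)
          (hh.intervalIntegrable _ _)
      rw [hdiff]
      have hFcJ := hFJ c le_rfl hcd
      have hFpcJ := hFpJ c le_rfl hcd
      have hbd : ∀ x ∈ Set.uIoc (F c) (Fp c), ‖h x‖ ≤ Hb := by
        intro x hx
        have h1 : min (F c) (Fp c) < x := hx.1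
        have h2 : x ≤ max (F c) (Fp c) := hx.2
        have hxJ : x ∈ J := ⟨(le_min hFcJ.1 hFpcJ.1).trans h1.le,
          h2.trans (max_le hFcJ.2 hFpcJ.2)⟩
        rw [Real.norm_eq_abs]
        exact hHb x hxJ
      have hnorm := intervalIntegral.norm_integral_le_of_norm_le_const hbd
      rw [Real.norm_eq_abs] at hnorm
      have habs2 : |Fp c - F c| ≤ ε := hclose c hcd
      calc |∫ w in (F c)..(Fp c), h w| ≤ Hb * |Fp c - F c| := hnorm
        _ ≤ Hb * ε := mul_le_mul_of_nonneg_left habs2 hHb0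
    have e1 : Hb * ε ≤ θ / 4 := by
      have h4 : (0:ℝ) < 4 * (Hb + 1) := by linarith
      have h5 : Hb * ε ≤ Hb * (θ / (4 * (Hb + 1))) := mul_le_mul_of_nonneg_left hεθ hHb0
      have h6 : 4 * (Hb + 1) * (θ / (4 * (Hb + 1))) = θ := by field_simp
      nlinarith [div_nonneg hθ.le h4.le]
    have e2 : η * I ≤ θ / 2 := by
      have h4 : (0:ℝ) < 2 * (I + 1) := by linarith
      have h6 : 2 * (I + 1) * η = θ := by rw [hηdef]; field_simp
      nlinarith
    calc |(∫ s in c..d, u' s * h (F s)) - ∫ w in e..(F c), h w|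
        = |((∫ s in c..d, u' s * h (F s)) - ∫ s in c..d, p s * h (Fp s))
            + ((∫ w in e..(Fp c), h w) - ∫ w in e..(F c), h w)| := by
          congr 1
          linarith [hsub']
      _ ≤ |(∫ s in c..d, u' s * h (F s)) - ∫ s in c..d, p s * h (Fp s)|
            + |(∫ w in e..(Fp c), h w) - ∫ w in e..(F c), h w| := abs_add_le _ _
      _ ≤ (Hb * ε + η * I) + Hb * ε := add_le_add hT1 hT2
      _ ≤ θ := by linarith
  by_contra hne
  have h0 : 0 < |(∫ s in c..d, u' s * h (F s)) - ∫ w in e..(F c), h w| :=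
    abs_pos.2 (sub_ne_zero.2 hne)
  linarith [key _ (half_pos h0)]

lemma tail_split (u' : ℝ → ℝ) (hui : Integrable u') {s q : ℝ} (hsq : s ≤ q) :
    (∫ x in Set.Ici s, u' x) = (∫ x in s..q, u' x) + ∫ x in Set.Ici q, u' x := by
  rw [integral_Ici_eq_integral_Ioi, integral_Ici_eq_integral_Ioi (x := q),
    ← Set.Ioc_union_Ioi_eq_Ioi hsq,
    setIntegral_union (Set.Ioc_disjoint_Ioi le_rfl) measurableSet_Ioi
      hui.integrableOn hui.integrableOn,
    intervalIntegral.integral_of_le hsq]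

lemma tail_continuous (u' : ℝ → ℝ) (hui : Integrable u') :
    Continuous fun s => ∫ x in Set.Ici s, u' x := by
  have h1 : ∀ s : ℝ, (∫ x in Set.Ici s, u' x)
      = (∫ x in Set.Ici (0:ℝ), u' x) - ∫ x in (0:ℝ)..s, u' x := by
    intro s
    rcases le_total s 0 with hs | hs
    · have := tail_split u' hui hs
      rw [intervalIntegral.integral_symm 0 s] at this
      linarith
    · have := tail_split u' hui hs
      linarith
  rw [funext h1]
  exact continuous_const.sub (hui.continuous_primitive 0)

/-- Change of variables for the tail primitive on `[t, ∞)`. -/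
theorem subst_Ici (u' : ℝ → ℝ) (hui : Integrable u') (hu0 : ∀ x, 0 ≤ u' x)
    (h : ℝ → ℝ) (hh : Continuous h) (t : ℝ) :
    ∫ s in Set.Ici t, u' s * h (∫ x in Set.Ici s, u' x)
      = ∫ w in (0:ℝ)..(∫ x in Set.Ici t, u' x), h w := by
  set F : ℝ → ℝ := fun s => ∫ x in Set.Ici s, u' x with hFdef
  have hFc : Continuous F := tail_continuous u' hui
  have hFnn : ∀ s, 0 ≤ F s := fun s => setIntegral_nonneg measurableSet_Ici (fun x _ => hu0 x)
  have hFle : ∀ s, F s ≤ ∫ x, u' x := fun s =>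
    setIntegral_le_integral hui (Eventually.of_forall hu0)
  obtain ⟨C0, hC0⟩ := (isCompact_Icc (a := (0:ℝ)) (b := ∫ x, u' x)).exists_bound_of_continuousOn
    hh.continuousOn
  have hintegrand : Integrable (fun s => u' s * h (F s)) := by
    have h1 : Integrable (fun s => h (F s) * u' s) :=
      hui.bdd_mul (hh.comp hFc).aestronglyMeasurable
        (Eventually.of_forall fun x => hC0 (F x) ⟨hFnn x, hFle x⟩)
    apply h1.congr
    filter_upwards with s
    ring
  have hlim1 : Tendsto (fun dd => ∫ s in t..dd, u' s * h (F s)) atTop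
      (𝓝 (∫ s in Set.Ioi t, u' s * h (F s))) :=
    intervalIntegral_tendsto_integral_Ioi t hintegrand.integrableOn tendsto_id
  have hFd0 : Tendsto F atTop (𝓝 0) := by
    have h1 : Tendsto (fun dd => ∫ x in t..dd, u' x) atTop (𝓝 (∫ x in Set.Ioi t, u' x)) :=
      intervalIntegral_tendsto_integral_Ioi t hui.integrableOn tendsto_id
    have h2 : Tendsto (fun dd => F t - ∫ x in t..dd, u' x) atTop
        (𝓝 (F t - ∫ x in Set.Ioi t, u' x)) := tendsto_const_nhds.sub h1
    have h3 : F t - ∫ x in Set.Ioi t, u' x = 0 := by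
      rw [hFdef]
      simp only []
      rw [integral_Ici_eq_integral_Ioi]
      ring
    rw [h3] at h2
    apply h2.congr'
    filter_upwards [eventually_ge_atTop t] with dd hdd
    have h4 := tail_split u' hui hdd
    rw [hFdef]
    simp only []
    linarith
  have hk : Continuous fun e' => ∫ w in e'..(F t), h w := by
    have h1 : ∀ e' : ℝ, (∫ w in e'..(F t), h w)
        = (∫ w in (0:ℝ)..(F t), h w) - ∫ w in (0:ℝ)..e', h w := by
      intro e'
      rw [← intervalIntegral.integral_interval_sub_left (hh.intervalIntegrable _ _)
        (hh.intervalIntegrable _ _)]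
    rw [funext h1]
    exact continuous_const.sub (intervalIntegral.continuous_primitive
      (fun a b => hh.intervalIntegrable a b) 0)
  have hlim2 : Tendsto (fun dd => ∫ w in (F dd)..(F t), h w) atTop
      (𝓝 (∫ w in (0:ℝ)..(F t), h w)) := by
    have h1 := (hk.continuousAt (x := 0)).tendsto.comp hFd0
    exact h1
  have heqd : ∀ᶠ dd in atTop, (∫ s in t..dd, u' s * h (F s)) = ∫ w in (F dd)..(F t), h w := by
    filter_upwards [eventually_ge_atTop t] with dd hdd
    have hs := subst_interval u' hui hu0 h hh t dd (F dd) hdd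
    have hleft : (∫ s in t..dd, u' s * h ((∫ x in s..dd, u' x) + F dd))
        = ∫ s in t..dd, u' s * h (F s) := by
      apply intervalIntegral.integral_congr
      intro s hsm
      rw [Set.uIcc_of_le hdd] at hsm
      have := tail_split u' hui (q := dd) hsm.2
      rw [hFdef]
      simp only []
      rw [this]
    have hright : (∫ x in t..dd, u' x) + F dd = F t := (tail_split u' hui hdd).symm
    rw [hleft, hright] at hs
    exact hs
  have hmain := tendsto_nhds_unique (hlim1.congr' heqd) hlim2
  show (∫ s in Set.Ici t, u' s * h (F s)) = ∫ w in (0:ℝ)..(F t), h w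
  rw [integral_Ici_eq_integral_Ioi]
  exact hmain

/-- Existence of the solution to `g v = δ + ∫_0^v φh(g)` on `[0, V]`, for continuous
nonnegative `φh` of linear growth. -/
theorem sol_exists (φh : ℝ → ℝ) (hφc : Continuous φh) (hφ0 : ∀ x, 0 ≤ φh x)
    (a b : ℝ) (ha : 0 ≤ a) (hb : 0 ≤ b)
    (hgrowth : ∀ x : ℝ, 0 ≤ x → φh x ≤ a * x + b)
    (δ : ℝ) (hδ : 0 ≤ δ) (V : ℝ) (hV : 0 ≤ V) :
    ∃ g : ℝ → ℝ, Continuous g ∧ Monotone g ∧ (∀ v, δ ≤ g v) ∧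
      ∀ v, 0 ≤ v → v ≤ V → g v = δ + ∫ w in (0:ℝ)..v, φh (g w) := by
  by_cases hφδ : φh δ = 0
  · refine ⟨fun _ => δ, continuous_const, monotone_const, fun v => le_rfl, ?_⟩
    intro v hv _
    simp [hφδ]
  · set B : ℝ := gronwallBound δ a b V with hBdef
    have hδB : δ ≤ B := by
      calc δ = gronwallBound δ a b 0 := (gronwallBound_x0 δ a b).symm
        _ ≤ B := gronwallBound_mono hδ ha hb hV
    set cf : ℝ → ℝ := fun x => max 0 (min 1 (B + 1 - x)) with hcfdef
    have hcfc : Continuous cf :=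
      continuous_const.max (continuous_const.min (continuous_const.sub continuous_id))
    have hcf01 : ∀ x, 0 ≤ cf x ∧ cf x ≤ 1 := fun x =>
      ⟨le_max_left _ _, max_le zero_le_one (min_le_left _ _)⟩
    have hcfeq : ∀ x, x ≤ B → cf x = 1 := by
      intro x hx
      rw [hcfdef]
      simp only []
      rw [min_eq_left (by linarith), max_eq_right zero_le_one]
    set φ2 : ℝ → ℝ := fun x => φh x * cf x with hφ2def
    have hφ2c : Continuous φ2 := hφc.mul hcfc
    have hφ2nn : ∀ x, 0 ≤ φ2 x := fun x => mul_nonneg (hφ0 x) (hcf01 x).1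
    have hφ2le : ∀ x, φ2 x ≤ φh x := by
      intro x
      have h1 := (hcf01 x).2
      have h2 := (hcf01 x).1
      have h3 := hφ0 x
      simp only [hφ2def]
      nlinarith
    have hφ2eq : ∀ x, x ≤ B → φ2 x = φh x := by
      intro x hx
      rw [hφ2def]
      simp only []
      rw [hcfeq x hx, mul_one]
    have hB1 : φ2 (B + 1) = 0 := by
      have hcf0 : cf (B + 1) = 0 := by
        rw [hcfdef]
        simp only []
        rw [show B + 1 - (B + 1) = (0:ℝ) by ring]
        simp
      rw [hφ2def]
      simp only []
      rw [hcf0, mul_zero]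
    set S : Set ℝ := Set.Ici δ ∩ φ2 ⁻¹' {0} with hSdef
    have hSmem : ∀ x, x ∈ S ↔ δ ≤ x ∧ φ2 x = 0 := by
      intro x
      simp [hSdef]
    have hSne : S.Nonempty := ⟨B + 1, (hSmem _).2 ⟨by linarith, hB1⟩⟩
    have hSbdd : BddBelow S := ⟨δ, fun x hx => ((hSmem x).1 hx).1⟩
    have hSclosed : IsClosed S := isClosed_Ici.inter (isClosed_singleton.preimage hφ2c)
    set x₁ : ℝ := sInf S with hx₁def
    have hx₁S : δ ≤ x₁ ∧ φ2 x₁ = 0 := (hSmem _).1 (hSclosed.csInf_mem hSne hSbdd)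
    have hφ2δ : φ2 δ ≠ 0 := by
      rw [hφ2eq δ hδB]
      exact hφδ
    have hδx₁ : δ < x₁ := lt_of_le_of_ne hx₁S.1 (by
      intro hcon
      exact hφ2δ (by rw [hcon]; exact hx₁S.2))
    have hpos : ∀ x, δ ≤ x → x < x₁ → 0 < φ2 x := by
      intro x hx1 hx2
      rcases lt_or_eq_of_le (hφ2nn x) with h | h
      · exact h
      · exact absurd (csInf_le hSbdd ((hSmem x).2 ⟨hx1, h.symm⟩)) (not_le.2 hx2)
    obtain ⟨g, hgc, hgm, hgb, hgeq⟩ := ode_exists φ2 hφ2c hφ2nn δ x₁ hδx₁ hx₁S.2 hpos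
    set pr : ℝ → ℝ := fun v => δ + ∫ w in (0:ℝ)..v, φ2 (g w) with hprdef
    have hφ2gc : Continuous fun w => φ2 (g w) := hφ2c.comp hgc
    have hprd : ∀ v, HasDerivAt pr (φ2 (g v)) v := by
      intro v
      have h1 := intervalIntegral.integral_hasDerivAt_right
        (hφ2gc.intervalIntegrable 0 v)
        ⟨Set.univ, Filter.univ_mem, hφ2gc.aestronglyMeasurable.restrict⟩
        hφ2gc.continuousAt
      exact h1.const_add δ
    have hgr : ∀ v ∈ Set.Icc (0:ℝ) V, g v ≤ B := by
      have hG := norm_le_gronwallBound_of_norm_deriv_right_le (δ := δ) (K := a) (ε := b)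
        (a := 0) (b := V) (f := pr) (f' := fun v => φ2 (g v))
        (fun v _ => (hprd v).continuousAt.continuousWithinAt)
        (fun v _ => (hprd v).hasDerivWithinAt)
        (by
          have h1 : pr 0 = δ := by
            rw [hprdef]
            simp
          rw [h1, Real.norm_of_nonneg hδ])
        (fun v hv => by
          have h1 : pr v = g v := (hgeq v hv.1).symm
          have h2 : 0 ≤ g v := hδ.trans (hgb v).1
          have h3 : ‖φ2 (g v)‖ = φ2 (g v) := Real.norm_of_nonneg (hφ2nn _)
          have h4 : ‖pr v‖ = g v := by rw [h1]; exact Real.norm_of_nonneg h2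
          rw [h3, h4]
          calc φ2 (g v) ≤ φh (g v) := hφ2le _
            _ ≤ a * g v + b := hgrowth _ h2)
      intro v hv
      have h5 := hG v hv
      have h1 : pr v = g v := (hgeq v hv.1).symm
      have h2 : 0 ≤ g v := hδ.trans (hgb v).1
      rw [h1, Real.norm_of_nonneg h2] at h5
      calc g v ≤ gronwallBound δ a b (v - 0) := h5
        _ ≤ B := by rw [sub_zero]; exact gronwallBound_mono hδ ha hb hv.2
    refine ⟨g, hgc, hgm, fun v => (hgb v).1, ?_⟩
    intro v hv hvV
    rw [hgeq v hv]
    congr 1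
    apply intervalIntegral.integral_congr
    intro w hw
    rw [Set.uIcc_of_le hv] at hw
    exact hφ2eq (g w) (hgr w ⟨hw.1, hw.2.trans hvV⟩)

lemma dbInterval_measurable (T : ℝ≥0∞) : MeasurableSet (dbInterval T) := by
  have h1 : dbInterval T = Set.Ici (0:ℝ) ∩ (fun t : ℝ => ENNReal.ofReal t) ⁻¹' (Set.Iic T) := by
    ext t
    simp [dbInterval, Set.mem_Ici, Set.mem_Iic]
  rw [h1]
  exact measurableSet_Ici.inter (ENNReal.measurable_ofReal measurableSet_Iic)

end DBDE

theorem stmt_8 (T : ℝ≥0∞) (hT : 0 < T) (u : ℝ → ℝ) (φ : ℝ → ℝ) (a b : ℝ)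
    (hu0 : ∀ t ∈ dbInterval T, 0 ≤ u t)
    (huInt : IntegrableOn u (dbInterval T))
    (hφc : ContinuousOn φ (Set.Ici 0))
    (hφ0 : ∀ x : ℝ, 0 ≤ x → 0 ≤ φ x)
    (ha : 0 ≤ a) (hb : 0 ≤ b)
    (hφgrowth : ∀ x : ℝ, 0 ≤ x → φ x ≤ a * x + b)
    (δ : ℝ) (hδ : 0 ≤ δ) :
    ∃ y : ℝ → ℝ, ContinuousOn y (dbInterval T) ∧
      (∃ M : ℝ, ∀ t ∈ dbInterval T, |y t| ≤ M) ∧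
      ∀ t ∈ dbInterval T, 0 ≤ y t ∧ y t = δ + ∫ s in dbTail T t, u s * φ (y s) := by
  classical
  have hmeas := DBDE.dbInterval_measurable T
  set u' : ℝ → ℝ := (dbInterval T).indicator u with hu'def
  have hu'int : Integrable u' := (integrable_indicator_iff hmeas).2 huInt
  have hu'0 : ∀ x, 0 ≤ u' x := by
    intro x
    rw [hu'def]
    by_cases hx : x ∈ dbInterval T
    · rw [Set.indicator_of_mem hx]
      exact hu0 x hx
    · rw [Set.indicator_of_notMem hx]
  set V : ℝ := ∫ x, u' x with hVdef
  have hV0 : 0 ≤ V := integral_nonneg hu'0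
  set φh : ℝ → ℝ := fun x => φ (max x 0) with hφhdef
  have hφhc : Continuous φh := hφc.comp_continuous (continuous_id.max continuous_const)
    (fun x => Set.mem_Ici.2 (le_max_right _ _))
  have hφh0 : ∀ x, 0 ≤ φh x := fun x => hφ0 _ (le_max_right _ _)
  have hφheq : ∀ x, 0 ≤ x → φh x = φ x := by
    intro x hx
    rw [hφhdef]
    simp only []
    rw [max_eq_left hx]
  have hφhgrowth : ∀ x, 0 ≤ x → φh x ≤ a * x + b := by
    intro x hx
    rw [hφheq x hx]
    exact hφgrowth x hx
  obtain ⟨g, hgc, hgm, hgδ, hgeq⟩ :=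
    DBDE.sol_exists φh hφhc hφh0 a b ha hb hφhgrowth δ hδ V hV0
  have hF0 : ∀ s : ℝ, 0 ≤ ∫ x in Set.Ici s, u' x := fun s =>
    setIntegral_nonneg measurableSet_Ici (fun x _ => hu'0 x)
  have hFV : ∀ s : ℝ, (∫ x in Set.Ici s, u' x) ≤ V := fun s =>
    setIntegral_le_integral hu'int (Eventually.of_forall hu'0)
  set y : ℝ → ℝ := fun t => g (∫ x in Set.Ici t, u' x) with hydef
  have hyδ : ∀ t, δ ≤ y t := fun t => hgδ _
  have hy0 : ∀ t, 0 ≤ y t := fun t => hδ.trans (hyδ t)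
  refine ⟨y, (hgc.comp (DBDE.tail_continuous u' hu'int)).continuousOn, ⟨g V, ?_⟩, ?_⟩
  · intro t ht
    rw [abs_of_nonneg (hy0 t)]
    exact hgm (hFV t)
  · intro t ht
    refine ⟨hy0 t, ?_⟩
    set h : ℝ → ℝ := fun w => φh (g w) with hhdef
    have hhc : Continuous h := hφhc.comp hgc
    have hintegrand_eq : (fun s => u' s * h (∫ x in Set.Ici s, u' x))
        = (dbInterval T).indicator (fun s => u s * φ (y s)) := by
      funext s
      by_cases hs : s ∈ dbInterval T
      · rw [Set.indicator_of_mem hs, hu'def, Set.indicator_of_mem hs]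
        congr 1
        rw [hhdef]
        simp only []
        rw [hφheq _ (hδ.trans (hgδ _))]
      · rw [Set.indicator_of_notMem hs, hu'def, Set.indicator_of_notMem hs, zero_mul]
    have hTail : Set.Ici t ∩ dbInterval T = dbTail T t := by
      ext s
      simp only [dbTail, dbInterval, Set.mem_setOf_eq, Set.mem_inter_iff, Set.mem_Ici]
      constructor
      · rintro ⟨h1, h2⟩
        exact ⟨h1, h2.2⟩
      · rintro ⟨h1, h2⟩
        exact ⟨h1, ⟨ht.1.trans h1, h2⟩⟩
    have step2 : (∫ s in dbTail T t, u s * φ (y s))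
        = ∫ s in Set.Ici t, u' s * h (∫ x in Set.Ici s, u' x) := by
      rw [hintegrand_eq]
      rw [setIntegral_indicator hmeas, hTail]
    have step3 : (∫ s in Set.Ici t, u' s * h (∫ x in Set.Ici s, u' x))
        = ∫ w in (0:ℝ)..(∫ x in Set.Ici t, u' x), h w :=
      DBDE.subst_Ici u' hu'int hu'0 h hhc t
    rw [step2, step3]
    exact hgeq _ (hF0 t) (hFV t)
end

section
/- Let T ∈ (0,∞], u : [0,T] → [0,∞) integrable, and φ : [0,∞) → [0,∞) continuous with linear growth and φ(x) > 0 for x > 0. Then for each δ > 0 the equation y_t = δ + ∫ₜᵀ u(s) φ(y_s) ds has a unique bounded continuous solution, given explicitly by y_t = G⁻¹( G(δ) − ∫ₜᵀ u(s) ds ), where G(z) = ∫_z^1 dx/φ(x) for z ≥ δ. -/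
open MeasureTheory Filter
open scoped ENNReal

open Topology

noncomputable def tailInt (w : ℝ → ℝ) (s : ℝ) : ℝ := ∫ r in Set.Ici s, w r

lemma tailInt_sub {w : ℝ → ℝ} (hw : Integrable w) {a b : ℝ} (hab : a ≤ b) :
    tailInt w a = (∫ r in a..b, w r) + tailInt w b := by
  unfold tailInt
  rw [← Set.Ico_union_Ici_eq_Ici hab,
    setIntegral_union (by simp [Set.disjoint_left]) measurableSet_Ici
      hw.integrableOn hw.integrableOn,
    integral_Ico_eq_integral_Ioo, intervalIntegral.integral_of_le hab,
    ← integral_Ioc_eq_integral_Ioo]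

lemma tailInt_eq (w : ℝ → ℝ) (hw : Integrable w) (s : ℝ) :
    tailInt w s = tailInt w 0 - ∫ r in (0:ℝ)..s, w r := by
  rcases le_total 0 s with h | h
  · rw [tailInt_sub hw h]; ring
  · rw [tailInt_sub hw h, intervalIntegral.integral_symm]; ring

lemma tailInt_continuous {w : ℝ → ℝ} (hw : Integrable w) : Continuous (tailInt w) := by
  have h := hw.continuous_primitive 0
  have : tailInt w = fun s => tailInt w 0 - ∫ r in (0:ℝ)..s, w r := funext (tailInt_eq w hw)
  rw [this]
  exact continuous_const.sub h

lemma tailInt_nonneg {w : ℝ → ℝ} (hw0 : ∀ s, 0 ≤ w s) (s : ℝ) : 0 ≤ tailInt w s :=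
  setIntegral_nonneg measurableSet_Ici fun x _ => hw0 x

lemma tailInt_le {w : ℝ → ℝ} (hw : Integrable w) (hw0 : ∀ s, 0 ≤ w s) (s : ℝ) :
    tailInt w s ≤ ∫ r, w r :=
  setIntegral_le_integral hw (Filter.Eventually.of_forall hw0)

lemma tailInt_tendsto_zero {w : ℝ → ℝ} (hw : Integrable w) :
    Tendsto (tailInt w) atTop (𝓝 0) := by
  have h1 : Tendsto (fun s => ∫ r in (0:ℝ)..s, w r) atTop (𝓝 (∫ r in Set.Ioi 0, w r)) :=
    intervalIntegral_tendsto_integral_Ioi 0 hw.integrableOn tendsto_id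
  have h0 : tailInt w 0 = ∫ r in Set.Ioi 0, w r := integral_Ici_eq_integral_Ioi
  rw [← h0] at h1
  have := (tendsto_const_nhds (x := tailInt w 0)).sub h1
  rw [sub_self] at this
  refine this.congr fun s => (tailInt_eq w hw s).symm

lemma tail_eq_interval {w : ℝ → ℝ} (hw : Integrable w) {β : ℝ}
    (hβ : ∀ x, β ≤ x → w x = 0) (s : ℝ) :
    tailInt w s = ∫ r in s..β, w r := by
  have h0 : tailInt w β = 0 := by
    unfold tailInt
    rw [setIntegral_congr_fun measurableSet_Ici (fun x hx => hβ x hx)]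
    simp
  rcases le_total s β with h | h
  · rw [tailInt_sub hw h, h0, add_zero]
  · have h1 : tailInt w s = 0 := by
      unfold tailInt
      rw [setIntegral_congr_fun measurableSet_Ici (fun x hx => hβ x (le_trans h hx))]
      simp
    have h2 : (∫ r in s..β, w r) = 0 := by
      rw [intervalIntegral.integral_symm]
      have : (∫ r in β..s, w r) = 0 := by
        rw [intervalIntegral.integral_of_le h]
        rw [setIntegral_congr_fun measurableSet_Ioc (fun x hx => hβ x hx.1.le)]
        simp
      rw [this]; ring
    rw [h1, h2]

lemma core_cont (v g : ℝ → ℝ) (hv : Continuous v) (hcs : HasCompactSupport v)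
    (hg : Continuous g) (t : ℝ) :
    ∫ s in Set.Ici t, v s * g (tailInt v s) = ∫ w in (0:ℝ)..(tailInt v t), g w := by
  -- find β beyond the support
  obtain ⟨β0, hβ0⟩ : BddAbove (tsupport v) := hcs.isCompact.bddAbove
  set β := β0 + 1 with hβdef
  have hβ : ∀ x, β ≤ x → v x = 0 := by
    intro x hx
    apply image_eq_zero_of_notMem_tsupport
    intro hmem
    have := hβ0 hmem
    linarith
  have hvInt : Integrable v := hv.integrable_of_hasCompactSupport hcs
  set W := tailInt v with hWdef
  have hWc : Continuous W := tailInt_continuous hvInt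
  have hW : ∀ s, HasDerivAt W (-(v s)) s := by
    intro s
    have h1 : HasDerivAt (fun u => ∫ x in β..u, v x) (v s) s := by
      exact intervalIntegral.integral_hasDerivAt_right (hv.intervalIntegrable β s)
        hv.stronglyMeasurable.stronglyMeasurableAtFilter hv.continuousAt
    have h2 : W = fun u => -∫ x in β..u, v x := by
      funext u
      rw [hWdef, tail_eq_interval hvInt hβ u, intervalIntegral.integral_symm]
    rw [h2]
    exact h1.neg
  set Γ : ℝ → ℝ := fun w => ∫ x in (0:ℝ)..w, g x with hΓdef
  have hΓ : ∀ w, HasDerivAt Γ (g w) w := fun w =>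
    intervalIntegral.integral_hasDerivAt_right (hg.intervalIntegrable 0 w)
      hg.stronglyMeasurable.stronglyMeasurableAtFilter hg.continuousAt
  have hQ : ∀ s, HasDerivAt (fun x => Γ (W x)) (g (W s) * (-(v s))) s := fun s =>
    (hΓ (W s)).comp s (hW s)
  have key : (∫ s in t..β, v s * g (W s)) = Γ (W t) - Γ (W β) := by
    have := intervalIntegral.integral_eq_sub_of_hasDerivAt
      (a := t) (b := β) (f := fun x => Γ (W x)) (f' := fun s => g (W s) * (-(v s)))
      (fun x _ => hQ x) ?_
    · calc (∫ s in t..β, v s * g (W s)) = -∫ s in t..β, g (W s) * (-(v s)) := by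
            rw [← intervalIntegral.integral_neg]
            congr 1; funext s; ring
        _ = Γ (W t) - Γ (W β) := by rw [this]; ring
    · exact ((hg.comp hWc).mul hv.neg).intervalIntegrable t β
  have hWβ : W β = 0 := by
    rw [hWdef, tail_eq_interval hvInt hβ β, intervalIntegral.integral_same]
  have hprod : ∀ x, β ≤ x → v x * g (W x) = 0 := fun x hx => by rw [hβ x hx]; ring
  have hprodInt : Integrable (fun x => v x * g (W x)) :=
    ((hv.mul (hg.comp hWc)).integrable_of_hasCompactSupport (hcs.mul_right))
  have lhs_eq : (∫ s in Set.Ici t, v s * g (W s)) = ∫ s in t..β, v s * g (W s) :=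
    tail_eq_interval hprodInt hprod t
  rw [lhs_eq, key, hWβ]
  simp [hΓdef]

lemma core_main (v g : ℝ → ℝ) (hv : Integrable v) (hv0 : ∀ s, 0 ≤ v s)
    (hg : Continuous g) (K : ℝ) (hK : ∀ x, |g x| ≤ K) (t : ℝ) :
    ∫ s in Set.Ici t, v s * g (tailInt v s) = ∫ w in (0:ℝ)..(tailInt v t), g w := by
  -- choose approximations
  have hsel : ∀ n : ℕ, ∃ w : ℝ → ℝ, Continuous w ∧ HasCompactSupport w ∧ Integrable w ∧
      (∀ x, 0 ≤ w x) ∧ (∫ x, |v x - w x|) ≤ 1 / (n + 1) := by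
    intro n
    obtain ⟨w0, hw0cs, hw0err, hw0c, hw0int⟩ :=
      hv.exists_hasCompactSupport_integral_sub_le (ε := 1 / (n + 1 : ℝ)) (by positivity)
    refine ⟨fun x => max (w0 x) 0, hw0c.max continuous_const,
      hw0cs.comp_left (g := fun y => max y 0) (by simp), ?_, fun x => le_max_right _ _, ?_⟩
    · exact hw0int.sup (integrable_zero _ _ _)
    · refine le_trans (integral_mono_of_nonneg (Eventually.of_forall fun x => abs_nonneg _)
        ((hv.sub hw0int).norm) (Eventually.of_forall fun x => ?_)) ?_
      · simp only [Real.norm_eq_abs, Pi.sub_apply]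
        rcases le_total (w0 x) 0 with h | h
        · rw [max_eq_right h]
          rw [abs_of_nonneg (by linarith [hv0 x])]
          have h2 : v x ≤ |v x - w0 x| := by
            rw [abs_of_nonneg (by linarith [hv0 x])]; linarith
          simpa using h2
        · rw [max_eq_left h]
      · simpa [Real.norm_eq_abs] using hw0err
  choose w hwc hwcs hwint hw0' hwerr using hsel
  set W := tailInt v with hWdef
  have hWc : Continuous W := tailInt_continuous hv
  set Wn : ℕ → ℝ → ℝ := fun n => tailInt (w n) with hWndef
  have hclose : ∀ n s, |Wn n s - W s| ≤ 1 / (n + 1) := by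
    intro n s
    have h1 : Wn n s - W s = ∫ x in Set.Ici s, (w n x - v x) := by
      rw [hWndef, hWdef]
      exact (integral_sub ((hwint n).integrableOn) (hv.integrableOn)).symm
    rw [h1]
    calc |∫ x in Set.Ici s, (w n x - v x)| ≤ ∫ x in Set.Ici s, |w n x - v x| := by
          simpa [Real.norm_eq_abs] using
            norm_integral_le_integral_norm (μ := volume.restrict (Set.Ici s))
            (f := fun x => w n x - v x)
      _ ≤ ∫ x, |w n x - v x| := by
          refine setIntegral_le_integral ((hwint n).sub hv).norm
            (Eventually.of_forall fun x => abs_nonneg _)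
      _ ≤ 1 / (n + 1) := by
          refine le_trans (le_of_eq ?_) (hwerr n)
          congr 1; funext x; rw [abs_sub_comm]
  have hWnlim : ∀ s, Tendsto (fun n => Wn n s) atTop (𝓝 (W s)) := by
    intro s
    have h1 : Tendsto (fun n => Wn n s - W s) atTop (𝓝 0) :=
      squeeze_zero_norm (fun n => by simpa [Real.norm_eq_abs] using hclose n s)
        tendsto_one_div_add_atTop_nhds_zero_nat
    have h2 := h1.add (tendsto_const_nhds (x := W s))
    simpa using h2
  -- RHS convergence
  set Γ : ℝ → ℝ := fun r => ∫ x in (0:ℝ)..r, g x with hΓdef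
  have hΓc : Continuous Γ :=
    intervalIntegral.continuous_primitive (fun a b => hg.intervalIntegrable a b) 0
  have hRHS : Tendsto (fun n => Γ (Wn n t)) atTop (𝓝 (Γ (W t))) :=
    (hΓc.continuousAt.tendsto).comp (hWnlim t)
  -- LHS convergence
  have hgWmeas : ∀ n, Continuous fun x => g (Wn n x) := fun n =>
    hg.comp (tailInt_continuous (hwint n))
  have hvg : Integrable (fun x => v x * g (W x)) (volume.restrict (Set.Ici t)) := by
    have : Integrable (fun x => g (W x) * v x) (volume.restrict (Set.Ici t)) :=
      (hv.integrableOn).bdd_mul (f := fun x => g (W x))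
        ((hg.comp hWc).aestronglyMeasurable) (c := K)
        (Eventually.of_forall fun x => by simpa [Real.norm_eq_abs] using hK (W x))
    simpa [mul_comm] using this
  have hAn : Tendsto (fun n => ∫ x in Set.Ici t, (w n x - v x) * g (Wn n x)) atTop (𝓝 0) := by
    refine squeeze_zero_norm (a := fun n : ℕ => K/(n+1)) (fun n => ?_) ?_
    · calc ‖∫ x in Set.Ici t, (w n x - v x) * g (Wn n x)‖
          ≤ ∫ x in Set.Ici t, ‖(w n x - v x) * g (Wn n x)‖ := norm_integral_le_integral_norm _
        _ ≤ ∫ x in Set.Ici t, |w n x - v x| * K := by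
            refine integral_mono_of_nonneg (Eventually.of_forall fun x => norm_nonneg _) ?_
              (Eventually.of_forall fun x => ?_)
            · exact (((hwint n).sub hv).norm.const_mul K).integrableOn.congr_fun
                (fun x _ => by simp [Real.norm_eq_abs, mul_comm]) measurableSet_Ici |>.congr_fun
                (fun x _ => rfl) measurableSet_Ici
            · simp only [Real.norm_eq_abs, abs_mul]
              exact mul_le_mul_of_nonneg_left (hK _) (abs_nonneg _)
        _ = ∫ x in Set.Ici t, |w n x - v x| * K := rfl
        _ ≤ K / (n+1) := by
            have h2 : (∫ x in Set.Ici t, |w n x - v x| * K) ≤ ∫ x, |w n x - v x| * K := by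
              refine setIntegral_le_integral (((hwint n).sub hv).norm.mul_const K)
                (Eventually.of_forall fun x => ?_)
              have : 0 ≤ K := le_trans (abs_nonneg _) (hK 0)
              positivity
            refine h2.trans ?_
            rw [integral_mul_const]
            have hK0 : 0 ≤ K := le_trans (abs_nonneg _) (hK 0)
            calc (∫ x, |w n x - v x|) * K ≤ (1/(n+1)) * K := by
                  refine mul_le_mul_of_nonneg_right ?_ hK0
                  refine le_trans (le_of_eq ?_) (hwerr n)
                  congr 1; funext x; rw [abs_sub_comm]
              _ = K / (n+1) := by ring
    · have : Tendsto (fun n : ℕ => K * (1/(n+1))) atTop (𝓝 (K * 0)) :=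
        tendsto_const_nhds.mul tendsto_one_div_add_atTop_nhds_zero_nat
      simpa using this.congr fun n => by ring
  have hBn : Tendsto (fun n => ∫ x in Set.Ici t, v x * (g (Wn n x) - g (W x))) atTop (𝓝 0) := by
    have h := tendsto_integral_of_dominated_convergence
      (F := fun n x => v x * (g (Wn n x) - g (W x))) (f := fun _ => (0:ℝ))
      (bound := fun x => |v x| * (2*K)) (μ := volume.restrict (Set.Ici t))
      (fun n => (hv.aestronglyMeasurable.restrict.mul
        (((hgWmeas n).sub (hg.comp hWc)).aestronglyMeasurable.restrict)))
      (hv.norm.mul_const (2*K)).integrableOn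
      (fun n => Eventually.of_forall fun x => ?_)
      (Eventually.of_forall fun x => ?_)
    · simpa using h
    · simp only [Real.norm_eq_abs, abs_mul]
      refine mul_le_mul_of_nonneg_left ?_ (abs_nonneg _)
      calc |g (Wn n x) - g (W x)| ≤ |g (Wn n x)| + |g (W x)| := abs_sub _ _
        _ ≤ K + K := add_le_add (hK _) (hK _)
        _ = 2*K := by ring
    · have : Tendsto (fun n => g (Wn n x)) atTop (𝓝 (g (W x))) :=
        (hg.continuousAt.tendsto).comp (hWnlim x)
      have h2 : Tendsto (fun n => v x * (g (Wn n x) - g (W x))) atTop (𝓝 (v x * (g (W x) - g (W x)))) :=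
        tendsto_const_nhds.mul (this.sub tendsto_const_nhds)
      simpa using h2
  -- combine
  have hsplit : ∀ n, (∫ x in Set.Ici t, w n x * g (Wn n x)) =
      (∫ x in Set.Ici t, (w n x - v x) * g (Wn n x)) +
      (∫ x in Set.Ici t, v x * (g (Wn n x) - g (W x))) +
      (∫ x in Set.Ici t, v x * g (W x)) := by
    intro n
    have i1 : Integrable (fun x => (w n x - v x) * g (Wn n x)) (volume.restrict (Set.Ici t)) := by
      have := (((hwint n).sub hv).integrableOn (s := Set.Ici t)).bdd_mul
        (f := fun x => g (Wn n x)) ((hgWmeas n).aestronglyMeasurable) (c := K)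
        (Eventually.of_forall fun x => by simpa [Real.norm_eq_abs] using hK (Wn n x))
      simpa [mul_comm] using this
    have i2 : Integrable (fun x => v x * (g (Wn n x) - g (W x))) (volume.restrict (Set.Ici t)) := by
      have := (hv.integrableOn (s := Set.Ici t)).bdd_mul
        (f := fun x => g (Wn n x) - g (W x))
        (((hgWmeas n).sub (hg.comp hWc)).aestronglyMeasurable) (c := 2*K)
        (Eventually.of_forall fun x => by
          simp only [Real.norm_eq_abs]
          calc |g (Wn n x) - g (W x)| ≤ |g (Wn n x)| + |g (W x)| := abs_sub _ _
            _ ≤ 2*K := by linarith [hK (Wn n x), hK (W x)])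
      simpa [mul_comm] using this
    have hpt : (fun x => w n x * g (Wn n x)) = fun x =>
        (w n x - v x) * g (Wn n x) + (v x * (g (Wn n x) - g (W x)) + v x * g (W x)) := by
      funext x; ring
    have i23 : Integrable (fun x => v x * (g (Wn n x) - g (W x)) + v x * g (W x))
        (volume.restrict (Set.Ici t)) := i2.add hvg
    rw [hpt, integral_add i1 i23, integral_add i2 hvg]
    ring
  have hLHS : Tendsto (fun n => ∫ x in Set.Ici t, w n x * g (Wn n x)) atTop
      (𝓝 (∫ x in Set.Ici t, v x * g (W x))) := by
    have := (hAn.add hBn).add (tendsto_const_nhds (x := ∫ x in Set.Ici t, v x * g (W x)))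
    rw [add_zero, zero_add] at this
    exact this.congr fun n => (hsplit n).symm
  have heq : ∀ n, (∫ x in Set.Ici t, w n x * g (Wn n x)) = Γ (Wn n t) := fun n =>
    core_cont (w n) g (hwc n) (hwcs n) hg t
  have := hLHS.congr heq
  exact tendsto_nhds_unique this hRHS

section G
variable {φ : ℝ → ℝ} {δ : ℝ}

lemma hinv_cont (hφc : ContinuousOn φ (Set.Ici 0)) (hφpos : ∀ x : ℝ, 0 < x → 0 < φ x) :
    ContinuousOn (fun x => (φ x)⁻¹) (Set.Ioi 0) :=
  ((hφc.mono Set.Ioi_subset_Ici_self).inv₀ fun x hx => (hφpos x hx).ne')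

lemma hIntInv (hφc : ContinuousOn φ (Set.Ici 0)) (hφpos : ∀ x : ℝ, 0 < x → 0 < φ x)
    {p q : ℝ} (hp : 0 < p) (hq : 0 < q) :
    IntervalIntegrable (fun x => (φ x)⁻¹) volume p q := by
  refine ContinuousOn.intervalIntegrable ((hinv_cont hφc hφpos).mono ?_)
  intro x hx
  have := hx.1
  simp only [Set.mem_Ioi]
  calc (0:ℝ) < min p q := lt_min hp hq
    _ ≤ x := hx.1

/-- `Gt z = ∫_δ^z dx/φ x`. -/
noncomputable def Gt (φ : ℝ → ℝ) (δ : ℝ) (z : ℝ) : ℝ := ∫ x in δ..z, (φ x)⁻¹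

lemma hGtDeriv (hφc : ContinuousOn φ (Set.Ici 0)) (hφpos : ∀ x : ℝ, 0 < x → 0 < φ x)
    (hδ : 0 < δ) {x : ℝ} (hx : 0 < x) : HasDerivAt (Gt φ δ) (φ x)⁻¹ x := by
  refine intervalIntegral.integral_hasDerivAt_right (hIntInv hφc hφpos hδ hx)
    ⟨Set.Ioi 0, Ioi_mem_nhds hx, ((hinv_cont hφc hφpos).aestronglyMeasurable measurableSet_Ioi)⟩
    (((hinv_cont hφc hφpos)).continuousAt (Ioi_mem_nhds hx))

lemma hGtCont (hφc : ContinuousOn φ (Set.Ici 0)) (hφpos : ∀ x : ℝ, 0 < x → 0 < φ x)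
    (hδ : 0 < δ) : ContinuousOn (Gt φ δ) (Set.Ici δ) := fun x hx =>
  ((hGtDeriv hφc hφpos hδ (lt_of_lt_of_le hδ hx)).continuousAt).continuousWithinAt

lemma hGtSplit (hφc : ContinuousOn φ (Set.Ici 0)) (hφpos : ∀ x : ℝ, 0 < x → 0 < φ x)
    (hδ : 0 < δ) {p q : ℝ} (hp : 0 < p) (hq : 0 < q) :
    Gt φ δ q = Gt φ δ p + ∫ x in p..q, (φ x)⁻¹ := by
  unfold Gt
  rw [intervalIntegral.integral_add_adjacent_intervals (hIntInv hφc hφpos hδ hp)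
    (hIntInv hφc hφpos hp hq)]

lemma hGtMono (hφc : ContinuousOn φ (Set.Ici 0)) (hφpos : ∀ x : ℝ, 0 < x → 0 < φ x)
    (hδ : 0 < δ) : StrictMonoOn (Gt φ δ) (Set.Ici δ) := by
  intro p hp q hq hpq
  have hp0 : 0 < p := lt_of_lt_of_le hδ hp
  have hq0 : 0 < q := lt_of_lt_of_le hδ hq
  rw [hGtSplit hφc hφpos hδ hp0 hq0]
  have : 0 < ∫ x in p..q, (φ x)⁻¹ := by
    refine intervalIntegral.intervalIntegral_pos_of_pos_on
      (hIntInv hφc hφpos hp0 hq0) (fun x hx => ?_) hpq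
    exact inv_pos.2 (hφpos x (lt_trans hp0 hx.1))
  linarith

lemma hGtNonneg (hφc : ContinuousOn φ (Set.Ici 0)) (hφpos : ∀ x : ℝ, 0 < x → 0 < φ x)
    (hδ : 0 < δ) {z : ℝ} (hz : δ ≤ z) : 0 ≤ Gt φ δ z := by
  unfold Gt
  refine intervalIntegral.integral_nonneg hz fun x hx => ?_
  exact inv_nonneg.2 (le_of_lt (hφpos x (lt_of_lt_of_le hδ hx.1)))

lemma hGtSurj {a b : ℝ} (hφc : ContinuousOn φ (Set.Ici 0)) (hφ0 : ∀ x : ℝ, 0 ≤ x → 0 ≤ φ x)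
    (hφpos : ∀ x : ℝ, 0 < x → 0 < φ x) (ha : 0 ≤ a) (hb : 0 ≤ b)
    (hφgrowth : ∀ x : ℝ, 0 ≤ x → φ x ≤ a * x + b) (hδ : 0 < δ) {w : ℝ} (hw : 0 ≤ w) :
    ∃ z, δ ≤ z ∧ Gt φ δ z = w := by
  have hbpos : 0 < a * δ + b := lt_of_lt_of_le (hφpos δ hδ) (hφgrowth δ hδ.le)
  -- find Z with Gt Z ≥ w
  obtain ⟨Z, hZδ, hZ⟩ : ∃ Z, δ ≤ Z ∧ w ≤ Gt φ δ Z := by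
    have hcomp : ∀ Z, δ ≤ Z → (∫ x in δ..Z, (a * x + b)⁻¹) ≤ Gt φ δ Z := by
      intro Z hZ
      refine intervalIntegral.integral_mono_on hZ ?_ (hIntInv hφc hφpos hδ (lt_of_lt_of_le hδ hZ))
        (fun x hx => ?_)
      · refine ContinuousOn.intervalIntegrable ?_
        refine ContinuousOn.inv₀ (by fun_prop) (fun x hx => ?_)
        rw [Set.uIcc_of_le hZ] at hx
        have : 0 < a * x + b := by nlinarith [hx.1, hx.2]
        exact this.ne'
      · have hx0 : 0 < x := lt_of_lt_of_le hδ hx.1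
        have h1 : 0 < φ x := hφpos x hx0
        have h2 : φ x ≤ a * x + b := hφgrowth x hx0.le
        exact inv_anti₀ h1 h2
    rcases eq_or_lt_of_le ha with haz | hapos
    · -- a = 0
      refine ⟨δ + b * w, by nlinarith, ?_⟩
      have hbp : 0 < b := by nlinarith
      refine le_trans ?_ (hcomp _ (by nlinarith))
      have : (∫ x in δ..(δ + b * w), (a * x + b)⁻¹) = (∫ x in δ..(δ + b * w), b⁻¹) := by
        refine intervalIntegral.integral_congr fun x _ => by rw [← haz]; ring_nf
      rw [this, intervalIntegral.integral_const, smul_eq_mul]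
      have : (δ + b * w - δ) * b⁻¹ = w := by field_simp; ring
      linarith [this.ge]
    · -- a > 0
      set Z := ((a * δ + b) * Real.exp (a * w) - b) / a with hZdef
      have hexp1 : 1 ≤ Real.exp (a * w) := Real.one_le_exp (by positivity)
      have haZb : a * Z + b = (a * δ + b) * Real.exp (a * w) := by
        rw [hZdef]; field_simp; ring
      have hZδ : δ ≤ Z := by
        have h1 : a * δ + b ≤ a * Z + b := by
          rw [haZb]; nlinarith
        nlinarith
      refine ⟨Z, hZδ, le_trans ?_ (hcomp Z hZδ)⟩
      have hlin : ∀ x ∈ Set.uIcc δ Z, 0 < a * x + b := by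
        intro x hx
        rw [Set.uIcc_of_le hZδ] at hx
        nlinarith [hx.1]
      have hderiv : ∀ x ∈ Set.uIcc δ Z,
          HasDerivAt (fun x => a⁻¹ * Real.log (a * x + b)) (a * x + b)⁻¹ x := by
        intro x hx
        have h1 : HasDerivAt (fun x : ℝ => a * x + b) a x := by
          simpa using ((hasDerivAt_id x).const_mul a).add_const b
        have h2 := (Real.hasDerivAt_log (hlin x hx).ne').comp x h1
        have h3 := h2.const_mul a⁻¹
        convert h3 using 1
        · rfl
        · rfl
        · rfl
        have := hapos.ne'; have := (hlin x hx).ne'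
        field_simp
      have hval : (∫ x in δ..Z, (a * x + b)⁻¹) =
          a⁻¹ * Real.log (a * Z + b) - a⁻¹ * Real.log (a * δ + b) := by
        refine intervalIntegral.integral_eq_sub_of_hasDerivAt hderiv ?_
        refine ContinuousOn.intervalIntegrable ?_
        exact ContinuousOn.inv₀ (by fun_prop) (fun x hx => (hlin x hx).ne')
      rw [hval, haZb, Real.log_mul (by positivity) (by positivity), Real.log_exp]
      have : a⁻¹ * a = 1 := by field_simp
      nlinarith [Real.log_nonneg (le_refl 1)]
  -- IVT
  have hGδ : Gt φ δ δ = 0 := intervalIntegral.integral_same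
  have hIVT := intermediate_value_Icc hZδ ((hGtCont hφc hφpos hδ).mono Set.Icc_subset_Ici_self)
  have hw' : w ∈ Set.Icc (Gt φ δ δ) (Gt φ δ Z) := by
    rw [hGδ]; exact ⟨hw, hZ⟩
  obtain ⟨z, hz, hzw⟩ := hIVT hw'
  exact ⟨z, hz.1, hzw⟩

end G


section G2
variable {φ : ℝ → ℝ} {δ : ℝ}
-- the image of Ici δ under Gt is Ici 0
lemma hGtImage (hφc : ContinuousOn φ (Set.Ici 0)) (hφpos : ∀ x : ℝ, 0 < x → 0 < φ x)
    (hδ : 0 < δ) (hs : ∀ w : ℝ, 0 ≤ w → ∃ z, δ ≤ z ∧ Gt φ δ z = w) :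
    Gt φ δ '' (Set.Ici δ) = Set.Ici (0:ℝ) := by
  apply Set.Subset.antisymm
  · rintro _ ⟨z, hz, rfl⟩
    exact hGtNonneg hφc hφpos hδ hz
  · rintro w hw
    obtain ⟨z, hz, rfl⟩ := hs w hw
    exact ⟨z, hz, rfl⟩

/-- order isomorphism `[δ,∞) ≃o [0,∞)` induced by `Gt`. -/
noncomputable def GtIso (hφc : ContinuousOn φ (Set.Ici 0)) (hφpos : ∀ x : ℝ, 0 < x → 0 < φ x)
    (hδ : 0 < δ) (hs : ∀ w : ℝ, 0 ≤ w → ∃ z, δ ≤ z ∧ Gt φ δ z = w) :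
    Set.Ici δ ≃o Set.Ici (0:ℝ) :=
  ((hGtMono hφc hφpos hδ).orderIso _ _).trans
    (OrderIso.setCongr _ _ (hGtImage hφc hφpos hδ hs))

/-- inverse of `Gt` -/
noncomputable def hFun (hφc : ContinuousOn φ (Set.Ici 0)) (hφpos : ∀ x : ℝ, 0 < x → 0 < φ x)
    (hδ : 0 < δ) (hs : ∀ w : ℝ, 0 ≤ w → ∃ z, δ ≤ z ∧ Gt φ δ z = w) (w : ℝ) : ℝ :=
  ((GtIso hφc hφpos hδ hs).symm ⟨max w 0, Set.mem_Ici.2 (le_max_right _ _)⟩ : Set.Ici δ)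

variable (hφc : ContinuousOn φ (Set.Ici 0)) (hφpos : ∀ x : ℝ, 0 < x → 0 < φ x) (hδ : 0 < δ)
  (hs : ∀ w : ℝ, 0 ≤ w → ∃ z, δ ≤ z ∧ Gt φ δ z = w)

lemma hFun_mem (w : ℝ) : δ ≤ hFun hφc hφpos hδ hs w :=
  Set.mem_Ici.1 ((GtIso hφc hφpos hδ hs).symm _).2

lemma GtIso_apply (z : Set.Ici δ) : (GtIso hφc hφpos hδ hs z : ℝ) = Gt φ δ z := rfl

lemma hFun_Gt {z : ℝ} (hz : δ ≤ z) : hFun hφc hφpos hδ hs (Gt φ δ z) = z := by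
  unfold hFun
  have h1 : max (Gt φ δ z) 0 = Gt φ δ z := max_eq_left (hGtNonneg hφc hφpos hδ hz)
  have h2 : (⟨max (Gt φ δ z) 0, Set.mem_Ici.2 (le_max_right _ _)⟩ : Set.Ici (0:ℝ)) =
      GtIso hφc hφpos hδ hs ⟨z, hz⟩ := by
    apply Subtype.ext
    rw [GtIso_apply]
    exact h1
  rw [h2, OrderIso.symm_apply_apply]

lemma Gt_hFun {w : ℝ} (hw : 0 ≤ w) : Gt φ δ (hFun hφc hφpos hδ hs w) = w := by
  have h1 := (GtIso hφc hφpos hδ hs).apply_symm_apply ⟨max w 0, Set.mem_Ici.2 (le_max_right _ _)⟩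
  have h2 := congrArg Subtype.val h1
  rw [GtIso_apply] at h2
  unfold hFun
  rw [h2]
  exact max_eq_left hw

lemma hFun_cont : Continuous (hFun hφc hφpos hδ hs) := by
  have h1 : Continuous fun w : ℝ => (⟨max w 0, Set.mem_Ici.2 (le_max_right _ _)⟩ : Set.Ici (0:ℝ)) :=
    Continuous.subtype_mk (continuous_id.max continuous_const) _
  exact continuous_subtype_val.comp ((GtIso hφc hφpos hδ hs).symm.continuous.comp h1)

lemma hFun_mono : Monotone (hFun hφc hφpos hδ hs) := by
  intro w1 w2 h
  have : (⟨max w1 0, Set.mem_Ici.2 (le_max_right _ _)⟩ : Set.Ici (0:ℝ)) ≤ ⟨max w2 0, Set.mem_Ici.2 (le_max_right _ _)⟩ :=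
    Subtype.mk_le_mk.2 (max_le_max h (le_refl 0))
  exact Subtype.coe_le_coe.2 ((GtIso hφc hφpos hδ hs).symm.monotone this)

/-- the key substitution identity : for continuous `g₁` agreeing with `φ ∘ hFun` on `[0,w]`,
`∫_0^w g₁ = hFun w - δ`. -/
lemma hFun_integral {g₁ : ℝ → ℝ} (hg₁ : Continuous g₁) {w : ℝ} (hw : 0 ≤ w)
    (hagree : ∀ r ∈ Set.Icc 0 w, g₁ r = φ (hFun hφc hφpos hδ hs r)) :
    (∫ r in (0:ℝ)..w, g₁ r) = hFun hφc hφpos hδ hs w - δ := by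
  set z := hFun hφc hφpos hδ hs w with hzdef
  have hzδ : δ ≤ z := hFun_mem _ _ _ _ _
  have hGz : Gt φ δ z = w := Gt_hFun _ _ _ _ hw
  have hsub := intervalIntegral.integral_comp_smul_deriv (f := Gt φ δ)
    (f' := fun x => (φ x)⁻¹) (g := g₁) (a := δ) (b := z)
    (fun x hx => by
      rw [Set.uIcc_of_le hzδ] at hx
      exact hGtDeriv hφc hφpos hδ (lt_of_lt_of_le hδ hx.1))
    (by
      refine (hinv_cont hφc hφpos).mono ?_
      rw [Set.uIcc_of_le hzδ]
      exact fun x hx => lt_of_lt_of_le hδ hx.1)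
    hg₁
  have hGδ : Gt φ δ δ = 0 := intervalIntegral.integral_same
  rw [hGδ, hGz] at hsub
  rw [← hsub]
  have : (∫ x in δ..z, (φ x)⁻¹ • (g₁ ∘ Gt φ δ) x) = ∫ x in δ..z, (1:ℝ) := by
    refine intervalIntegral.integral_congr fun x hx => ?_
    rw [Set.uIcc_of_le hzδ] at hx
    have hx0 : 0 < x := lt_of_lt_of_le hδ hx.1
    have hGx_mem : Gt φ δ x ∈ Set.Icc 0 w := by
      constructor
      · exact hGtNonneg hφc hφpos hδ hx.1
      · rw [← hGz]
        rcases eq_or_lt_of_le hx.2 with h | h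
        · rw [h]
        · exact (hGtMono hφc hφpos hδ hx.1 hzδ h).le
    have h1 : g₁ (Gt φ δ x) = φ (hFun hφc hφpos hδ hs (Gt φ δ x)) := hagree _ hGx_mem
    have h2 : hFun hφc hφpos hδ hs (Gt φ δ x) = x := hFun_Gt _ _ _ _ hx.1
    simp only [Function.comp_apply, smul_eq_mul, h1, h2]
    exact inv_mul_cancel₀ (hφpos x hx0).ne'
  rw [this]
  simp
end G2

lemma dbInterval_eq (T : ℝ≥0∞) :
    dbInterval T = Set.Ici 0 ∩ ENNReal.ofReal ⁻¹' (Set.Iic T) := rfl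

lemma dbClosed (T : ℝ≥0∞) : IsClosed (dbInterval T) :=
  isClosed_Ici.inter (isClosed_Iic.preimage ENNReal.continuous_ofReal)

lemma dbMeas (T : ℝ≥0∞) : MeasurableSet (dbInterval T) := (dbClosed T).measurableSet

lemma dbTail_eq_inter (T : ℝ≥0∞) (t : ℝ) :
    dbTail T t = Set.Ici t ∩ ENNReal.ofReal ⁻¹' (Set.Iic T) := rfl

lemma dbTailClosed (T : ℝ≥0∞) (t : ℝ) : IsClosed (dbTail T t) := by
  rw [dbTail_eq_inter]
  exact isClosed_Ici.inter (isClosed_Iic.preimage ENNReal.continuous_ofReal)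

lemma dbTailMeas (T : ℝ≥0∞) (t : ℝ) : MeasurableSet (dbTail T t) :=
  (dbTailClosed T t).measurableSet

lemma dbTail_eq (T : ℝ≥0∞) {t : ℝ} (ht : 0 ≤ t) :
    dbTail T t = Set.Ici t ∩ dbInterval T := by
  ext s
  simp only [dbTail, dbInterval, Set.mem_setOf_eq, Set.mem_inter_iff, Set.mem_Ici]
  constructor
  · exact fun ⟨h1, h2⟩ => ⟨h1, le_trans ht h1, h2⟩
  · exact fun ⟨h1, _, h3⟩ => ⟨h1, h3⟩

lemma dbTail_subset (T : ℝ≥0∞) {t : ℝ} (ht : 0 ≤ t) : dbTail T t ⊆ dbInterval T := by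
  rw [dbTail_eq T ht]; exact Set.inter_subset_right

lemma dbTail_tail (T : ℝ≥0∞) {t s : ℝ} (hts : t ≤ s) :
    dbTail T s = Set.Ici s ∩ dbTail T t := by
  ext r
  simp only [dbTail, Set.mem_setOf_eq, Set.mem_inter_iff, Set.mem_Ici]
  constructor
  · exact fun ⟨h1, h2⟩ => ⟨h1, le_trans hts h1, h2⟩
  · exact fun ⟨h1, _, h3⟩ => ⟨h1, h3⟩

lemma zero_mem_db {T : ℝ≥0∞} : (0:ℝ) ∈ dbInterval T := by
  constructor
  · exact le_refl 0
  · simp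

lemma db_integral_eq (T : ℝ≥0∞) {t : ℝ} (ht : 0 ≤ t) (f : ℝ → ℝ) :
    ∫ s in dbTail T t, f s = ∫ s in Set.Ici t, (dbInterval T).indicator f s := by
  rw [setIntegral_indicator (dbMeas T), dbTail_eq T ht]

theorem stmt_9 (T : ℝ≥0∞) (hT : 0 < T) (u : ℝ → ℝ) (φ : ℝ → ℝ) (a b : ℝ)
    (hu0 : ∀ t ∈ dbInterval T, 0 ≤ u t)
    (huInt : IntegrableOn u (dbInterval T))
    (hφc : ContinuousOn φ (Set.Ici 0))
    (hφ0 : ∀ x : ℝ, 0 ≤ x → 0 ≤ φ x)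
    (hφpos : ∀ x : ℝ, 0 < x → 0 < φ x)
    (ha : 0 ≤ a) (hb : 0 ≤ b)
    (hφgrowth : ∀ x : ℝ, 0 ≤ x → φ x ≤ a * x + b)
    (δ : ℝ) (hδ : 0 < δ) :
    ∃ y : ℝ → ℝ,
      (ContinuousOn y (dbInterval T) ∧ (∃ M : ℝ, ∀ t ∈ dbInterval T, |y t| ≤ M) ∧
        ∀ t ∈ dbInterval T, y t = δ + ∫ s in dbTail T t, u s * φ (y s)) ∧
      (∀ y' : ℝ → ℝ,
        (ContinuousOn y' (dbInterval T) ∧ (∃ M : ℝ, ∀ t ∈ dbInterval T, |y' t| ≤ M) ∧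
          ∀ t ∈ dbInterval T, y' t = δ + ∫ s in dbTail T t, u s * φ (y' s)) →
        ∀ t ∈ dbInterval T, y' t = y t) ∧
      -- explicit representation: y t = G⁻¹(G(δ) − ∫ₜᵀ u), with G(z) = ∫_z^1 dx/φ(x)
      ∀ t ∈ dbInterval T, δ ≤ y t ∧
        (∫ x in (y t)..1, (φ x)⁻¹) = (∫ x in δ..1, (φ x)⁻¹) - ∫ s in dbTail T t, u s := by
  classical
  have hsurj : ∀ w : ℝ, 0 ≤ w → ∃ z, δ ≤ z ∧ Gt φ δ z = w := fun w hw =>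
    hGtSurj hφc hφ0 hφpos ha hb hφgrowth hδ hw
  -- setup
  set ut : ℝ → ℝ := (dbInterval T).indicator u with hutdef
  have hut0 : ∀ s, 0 ≤ ut s := by
    intro s
    by_cases h : s ∈ dbInterval T
    · rw [hutdef, Set.indicator_of_mem h]; exact hu0 s h
    · rw [hutdef, Set.indicator_of_notMem h]
  have hutInt : Integrable ut := (integrable_indicator_iff (dbMeas T)).2 huInt
  set F : ℝ → ℝ := tailInt ut with hFdef
  have hFcont : Continuous F := tailInt_continuous hutInt
  have hF0 : ∀ t, 0 ≤ F t := tailInt_nonneg hut0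
  set c : ℝ := ∫ r, ut r with hcdef
  have hFc : ∀ t, F t ≤ c := tailInt_le hutInt hut0
  have hc0 : 0 ≤ c := integral_nonneg hut0
  set h : ℝ → ℝ := hFun hφc hφpos hδ hsurj with hhdef
  set y : ℝ → ℝ := fun t => h (F t) with hydef
  have hyδ : ∀ t, δ ≤ y t := fun t => hFun_mem hφc hφpos hδ hsurj (F t)
  have hGy : ∀ t, Gt φ δ (y t) = F t := fun t => Gt_hFun hφc hφpos hδ hsurj (hF0 t)
  have hycont : Continuous y := (hFun_cont hφc hφpos hδ hsurj).comp hFcont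
  -- clamp
  have hclamp_mem : ∀ r : ℝ, min (max r 0) c ∈ Set.Icc 0 c := fun r =>
    ⟨le_min (le_max_right r 0) hc0, min_le_right _ _⟩
  have hclamp_id : ∀ r ∈ Set.Icc (0:ℝ) c, min (max r 0) c = r := by
    intro r hr
    rw [max_eq_left hr.1, min_eq_left hr.2]
  have hclamp_cont : Continuous fun r : ℝ => min (max r 0) c :=
    (continuous_id.max continuous_const).min continuous_const
  set g₁ : ℝ → ℝ := fun r => φ (h (min (max r 0) c)) with hg₁def
  have hg₁c : Continuous g₁ := by
    refine hφc.comp_continuous ((hFun_cont hφc hφpos hδ hsurj).comp hclamp_cont) fun r => ?_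
    exact le_trans hδ.le (hFun_mem hφc hφpos hδ hsurj _)
  have hg₁agree : ∀ r ∈ Set.Icc (0:ℝ) c, g₁ r = φ (h r) := by
    intro r hr
    rw [hg₁def]
    simp only []
    rw [hclamp_id r hr]
  obtain ⟨K, hKbound⟩ := (isCompact_Icc (a := (0:ℝ)) (b := c)).exists_bound_of_continuousOn
    hg₁c.continuousOn
  have hg₁K : ∀ r, |g₁ r| ≤ K := by
    intro r
    have h1 : g₁ r = g₁ (min (max r 0) c) := by
      rw [hg₁def]
      simp only []
      rw [hclamp_id _ (hclamp_mem r)]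
    rw [h1]
    simpa [Real.norm_eq_abs] using hKbound _ (hclamp_mem r)
  have hg₁F : ∀ s, g₁ (F s) = φ (y s) := fun s => hg₁agree (F s) ⟨hF0 s, hFc s⟩
  -- main equation for y
  have hcore := fun t => core_main ut g₁ hutInt hut0 hg₁c K hg₁K t
  have hmain : ∀ t ∈ dbInterval T, y t = δ + ∫ s in dbTail T t, u s * φ (y s) := by
    intro t ht
    have h1 : (∫ s in dbTail T t, u s * φ (y s)) = ∫ s in Set.Ici t, ut s * g₁ (F s) := by
      rw [db_integral_eq T ht.1]
      refine setIntegral_congr_fun measurableSet_Ici fun s _ => ?_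
      by_cases hs : s ∈ dbInterval T
      · rw [Set.indicator_of_mem hs, hutdef, Set.indicator_of_mem hs, hg₁F]
      · rw [Set.indicator_of_notMem hs, hutdef, Set.indicator_of_notMem hs, zero_mul]
    have h2 : (∫ r in (0:ℝ)..(F t), g₁ r) = y t - δ := by
      refine hFun_integral hφc hφpos hδ hsurj hg₁c (hF0 t) fun r hr => ?_
      exact hg₁agree r ⟨hr.1, le_trans hr.2 (hFc t)⟩
    rw [h1, hcore t, h2]
    ring
  -- third bullet
  have hthird : ∀ t ∈ dbInterval T, δ ≤ y t ∧
      (∫ x in (y t)..1, (φ x)⁻¹) = (∫ x in δ..1, (φ x)⁻¹) - ∫ s in dbTail T t, u s := by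
    intro t ht
    refine ⟨hyδ t, ?_⟩
    have hu_eq : (∫ s in dbTail T t, u s) = F t := by
      rw [db_integral_eq T ht.1]; rfl
    have hadd : (∫ x in δ..(y t), (φ x)⁻¹) + (∫ x in (y t)..1, (φ x)⁻¹)
        = ∫ x in δ..1, (φ x)⁻¹ :=
      intervalIntegral.integral_add_adjacent_intervals
        (hIntInv hφc hφpos hδ (lt_of_lt_of_le hδ (hyδ t)))
        (hIntInv hφc hφpos (lt_of_lt_of_le hδ (hyδ t)) one_pos)
    have hGy' : (∫ x in δ..(y t), (φ x)⁻¹) = F t := hGy t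
    rw [hu_eq]
    linarith
  -- uniqueness
  have huniq : ∀ y' : ℝ → ℝ,
      (ContinuousOn y' (dbInterval T) ∧ (∃ M : ℝ, ∀ t ∈ dbInterval T, |y' t| ≤ M) ∧
        ∀ t ∈ dbInterval T, y' t = δ + ∫ s in dbTail T t, u s * φ (y' s)) →
      ∀ t ∈ dbInterval T, y' t = y t := by
    rintro y' ⟨hy'c, ⟨M', hM'⟩, hy'eq⟩
    have hM'0 : 0 ≤ M' := le_trans (abs_nonneg _) (hM' 0 zero_mem_db)
    -- Step 1 : y' is nonnegative on dbInterval
    have hy'nonneg : ∀ t ∈ dbInterval T, 0 ≤ y' t := by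
      by_contra hcon
      push_neg at hcon
      obtain ⟨t0, ht0, ht0neg⟩ := hcon
      -- the integrand is integrable on the tail of t0
      have hint : IntegrableOn (fun s => u s * φ (y' s)) (dbTail T t0) := by
        by_contra hni
        have := hy'eq t0 ht0
        rw [integral_undef hni] at this
        linarith
      set f : ℝ → ℝ := (dbTail T t0).indicator (fun s => u s * φ (y' s)) with hfdef
      have hfint : Integrable f := (integrable_indicator_iff (dbTailMeas T t0)).2 hint
      have hΦeq : ∀ s, t0 ≤ s → s ∈ dbInterval T → y' s = δ + tailInt f s := by
        intro s hs hsdb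
        have h1 : tailInt f s = ∫ r in dbTail T s, u r * φ (y' r) := by
          unfold tailInt
          rw [hfdef, setIntegral_indicator (dbTailMeas T t0), ← dbTail_tail T hs]
        rw [h1]
        exact hy'eq s hsdb
      have htend := tailInt_tendsto_zero hfint
      have hev : ∀ᶠ s in atTop, |tailInt f s| < δ := by
        have := Metric.tendsto_nhds.mp htend δ hδ
        refine this.mono fun s hs => ?_
        simpa [Real.dist_eq] using hs
      obtain ⟨s1, hs1⟩ := hev.exists_forall_of_atTop
      -- the bad set
      set N : Set ℝ := {s | s ∈ dbTail T t0 ∧ y' s < 0} with hNdef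
      have ht0N : t0 ∈ N := ⟨⟨le_refl t0, ht0.2⟩, ht0neg⟩
      have hNbdd : BddAbove N := by
        refine ⟨s1, fun s hs => ?_⟩
        by_contra hss
        push_neg at hss
        have h2 := hs1 s hss.le
        have h3 : s ∈ dbInterval T := dbTail_subset T ht0.1 hs.1
        have h4 := hΦeq s hs.1.1 h3
        have h5 := hs.2
        have h6 : -δ < tailInt f s := by
          have := abs_lt.1 h2
          linarith [this.1]
        linarith
      set sstar := sSup N with hsdef
      have hsclos : sstar ∈ closure N := csSup_mem_closure ⟨t0, ht0N⟩ hNbdd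
      have hCclosed : IsClosed (dbTail T t0 ∩ y' ⁻¹' (Set.Iic 0)) :=
        (hy'c.mono (dbTail_subset T ht0.1)).preimage_isClosed_of_isClosed
          (dbTailClosed T t0) isClosed_Iic
      have hsC : sstar ∈ dbTail T t0 ∩ y' ⁻¹' (Set.Iic 0) := by
        have hsub : N ⊆ dbTail T t0 ∩ y' ⁻¹' (Set.Iic 0) := fun s hs => ⟨hs.1, hs.2.le⟩
        exact closure_minimal hsub hCclosed hsclos
      have hsdb : sstar ∈ dbInterval T := dbTail_subset T ht0.1 hsC.1
      -- nonnegativity of the tail integral at sstar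
      have hpos : 0 ≤ ∫ s in dbTail T sstar, u s * φ (y' s) := by
        refine setIntegral_nonneg_ae (dbTailMeas T sstar) ?_
        rw [ae_iff]
        refine measure_mono_null (fun x hx => ?_) (Real.volume_singleton (a := sstar))
        simp only [Set.mem_setOf_eq, Classical.not_imp, not_le] at hx
        obtain ⟨hx1, hx2⟩ := hx
        simp only [Set.mem_singleton_iff]
        by_contra hne
        have hxgt : sstar < x := lt_of_le_of_ne hx1.1 (Ne.symm hne)
        have hxdb : x ∈ dbTail T t0 := ⟨le_trans hsC.1.1 hx1.1, hx1.2⟩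
        have hxN : x ∉ N := fun hxN => (not_le.2 hxgt) (le_csSup hNbdd hxN)
        have hy'x : 0 ≤ y' x := by
          by_contra hy'x
          exact hxN ⟨hxdb, not_le.1 hy'x⟩
        have hux : 0 ≤ u x := hu0 x (dbTail_subset T ht0.1 hxdb)
        have hφx : 0 ≤ φ (y' x) := hφ0 _ hy'x
        nlinarith
      have heq := hy'eq sstar hsdb
      have hle : y' sstar ≤ 0 := hsC.2
      linarith
    -- Step 2 : y' ≥ δ on dbInterval
    have hy'δ : ∀ t ∈ dbInterval T, δ ≤ y' t := by
      intro t ht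
      have hpos : 0 ≤ ∫ s in dbTail T t, u s * φ (y' s) := by
        refine setIntegral_nonneg (dbTailMeas T t) fun x hx => ?_
        have hxdb : x ∈ dbInterval T := dbTail_subset T ht.1 hx
        exact mul_nonneg (hu0 x hxdb) (hφ0 _ (hy'nonneg x hxdb))
      have := hy'eq t ht
      linarith
    -- continuity and integrability
    have hφy'c : ContinuousOn (fun s => φ (y' s)) (dbInterval T) :=
      hφc.comp hy'c fun x hx => hy'nonneg x hx
    set v : ℝ → ℝ := (dbInterval T).indicator (fun s => u s * φ (y' s)) with hvdef
    have hv0 : ∀ s, 0 ≤ v s := by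
      intro s
      by_cases hs : s ∈ dbInterval T
      · rw [hvdef, Set.indicator_of_mem hs]
        exact mul_nonneg (hu0 s hs) (hφ0 _ (hy'nonneg s hs))
      · rw [hvdef, Set.indicator_of_notMem hs]
    have hvint : Integrable v := by
      rw [hvdef, integrable_indicator_iff (dbMeas T)]
      refine Integrable.mono ((huInt.norm.const_mul (a*M'+b))) ?_ ?_
      · exact huInt.aestronglyMeasurable.mul (hφy'c.aestronglyMeasurable (dbMeas T))
      · rw [ae_restrict_iff' (dbMeas T)]
        refine Eventually.of_forall fun x hx => ?_
        have h1 : 0 ≤ y' x := hy'nonneg x hx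
        have h2 : φ (y' x) ≤ a * (y' x) + b := hφgrowth _ h1
        have h3 : y' x ≤ M' := le_trans (le_abs_self _) (hM' x hx)
        have h4 : 0 ≤ φ (y' x) := hφ0 _ h1
        have h5 : 0 ≤ u x := hu0 x hx
        simp only [Real.norm_eq_abs, abs_mul]
        rw [abs_of_nonneg h5, abs_of_nonneg h4, abs_of_nonneg h5]
        have : a * y' x + b ≤ a * M' + b := by nlinarith
        have h6 : 0 ≤ a * M' + b := by nlinarith
        rw [abs_of_nonneg h6]
        nlinarith
    -- tail of v
    have hW' : ∀ s ∈ dbInterval T, tailInt v s = y' s - δ := by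
      intro s hs
      have h1 : tailInt v s = ∫ r in dbTail T s, u r * φ (y' r) := by
        unfold tailInt
        rw [hvdef, setIntegral_indicator (dbMeas T), ← dbTail_eq T hs.1]
      rw [h1, hy'eq s hs]
      ring
    -- the second clamp function
    have hclamp2_mem : ∀ r : ℝ, min (max r 0) M' ∈ Set.Icc 0 M' := fun r =>
      ⟨le_min (le_max_right r 0) hM'0, min_le_right _ _⟩
    have hclamp2_id : ∀ r ∈ Set.Icc (0:ℝ) M', min (max r 0) M' = r := by
      intro r hr
      rw [max_eq_left hr.1, min_eq_left hr.2]
    set g₂ : ℝ → ℝ := fun r => (φ (δ + min (max r 0) M'))⁻¹ with hg₂def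
    have hg₂c : Continuous g₂ := by
      have hcl : Continuous fun r : ℝ => δ + min (max r 0) M' :=
        continuous_const.add ((continuous_id.max continuous_const).min continuous_const)
      refine (hinv_cont hφc hφpos).comp_continuous hcl fun r => ?_
      have := (hclamp2_mem r).1
      simp only [Set.mem_Ioi]
      linarith
    obtain ⟨K₂, hK₂bound⟩ := (isCompact_Icc (a := (0:ℝ)) (b := M')).exists_bound_of_continuousOn
      hg₂c.continuousOn
    have hg₂K : ∀ r, |g₂ r| ≤ K₂ := by
      intro r
      have h1 : g₂ r = g₂ (min (max r 0) M') := by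
        rw [hg₂def]
        simp only []
        rw [hclamp2_id _ (hclamp2_mem r)]
      rw [h1]
      simpa [Real.norm_eq_abs] using hK₂bound _ (hclamp2_mem r)
    -- apply the core lemma
    intro t ht
    have hcore2 := core_main v g₂ hvint hv0 hg₂c K₂ hg₂K t
    have hy'M : y' t - δ ∈ Set.Icc (0:ℝ) M' := by
      constructor
      · linarith [hy'δ t ht]
      · have := le_trans (le_abs_self _) (hM' t ht)
        linarith
    -- LHS is F t
    have hLHS : (∫ s in Set.Ici t, v s * g₂ (tailInt v s)) = F t := by
      have hFt : F t = ∫ s in Set.Ici t, ut s := rfl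
      rw [hFt]
      refine setIntegral_congr_fun measurableSet_Ici fun s _ => ?_
      by_cases hs : s ∈ dbInterval T
      · have hW's : tailInt v s = y' s - δ := hW' s hs
        have hmem : y' s - δ ∈ Set.Icc (0:ℝ) M' := by
          constructor
          · linarith [hy'δ s hs]
          · have := le_trans (le_abs_self _) (hM' s hs)
            linarith
        have hg₂val : g₂ (tailInt v s) = (φ (y' s))⁻¹ := by
          rw [hW's, hg₂def]
          simp only []
          rw [hclamp2_id _ hmem]
          congr 1
          ring_nf
        rw [hvdef, Set.indicator_of_mem hs, hutdef, Set.indicator_of_mem hs, hg₂val]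
        have hφne : φ (y' s) ≠ 0 := (hφpos _ (lt_of_lt_of_le hδ (hy'δ s hs))).ne'
        field_simp
      · rw [hvdef, Set.indicator_of_notMem hs, hutdef, Set.indicator_of_notMem hs, zero_mul]
    -- RHS
    have hWt : tailInt v t = y' t - δ := hW' t ht
    have hRHS : (∫ w in (0:ℝ)..(tailInt v t), g₂ w) = ∫ x in δ..(y' t), (φ x)⁻¹ := by
      rw [hWt]
      have h1 : (∫ w in (0:ℝ)..(y' t - δ), g₂ w) = ∫ w in (0:ℝ)..(y' t - δ), (φ (δ + w))⁻¹ := by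
        refine intervalIntegral.integral_congr fun w hw => ?_
        rw [Set.uIcc_of_le hy'M.1] at hw
        rw [hg₂def]
        simp only []
        rw [hclamp2_id _ ⟨hw.1, le_trans hw.2 hy'M.2⟩]
      rw [h1]
      have h2 := intervalIntegral.integral_comp_add_left (a := (0:ℝ)) (b := y' t - δ)
        (fun x => (φ x)⁻¹) δ
      rw [h2]
      norm_num
    have hGty' : Gt φ δ (y' t) = F t := by
      rw [← hLHS, hcore2, hRHS]
      rfl
    -- conclude by injectivity
    have hGtyt : Gt φ δ (y t) = F t := hGy t
    have hinj := (hGtMono hφc hφpos hδ).injOn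
    refine hinj (Set.mem_Ici.2 (hy'δ t ht)) (Set.mem_Ici.2 (hyδ t)) ?_
    rw [hGty', hGtyt]
  refine ⟨y, ⟨hycont.continuousOn, ⟨h c, fun t ht => ?_⟩, hmain⟩, huniq, hthird⟩
  rw [abs_of_nonneg (le_trans hδ.le (hyδ t))]
  exact hFun_mono hφc hφpos hδ hsurj (hFc t)
end

section
/- Inf-convolution approximation of a uniformly continuous generator: let g : [0,T] × ℝ → ℝ satisfy |g(t,y₁) − g(t,y₂)| ≤ u(t) ρ(|y₁ − y₂|), where u(t) > 0, ρ is nondecreasing, continuous, ρ(0)=0, and ρ(x) ≤ A(1+x). For n ∈ ℕ define gⁿ(t,y) = inf_{p ∈ ℝ} { g(t,p) + (n+A) u(t) |p − y| }. Then gⁿ is well-defined, gⁿ(t,y) ≤ g(t,y), |gⁿ(t,y₁) − gⁿ(t,y₂)| ≤ (n+A) u(t) |y₁ − y₂|, and |gⁿ(t,y₁) − gⁿ(t,y₂)| ≤ u(t) ρ(|y₁ − y₂|) for all t, y₁, y₂. -/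
open MeasureTheory Filter
open scoped ENNReal

theorem stmt_15 (T : ℝ≥0∞) (hT : 0 < T) (u : ℝ → ℝ) (ρ : ℝ → ℝ) (A : ℝ)
    (g : ℝ → ℝ → ℝ)
    (hu0 : ∀ t ∈ dbInterval T, 0 < u t)
    (hρc : ContinuousOn ρ (Set.Ici 0))
    (hρmono : MonotoneOn ρ (Set.Ici (0 : ℝ)))
    (hρ0 : ρ 0 = 0) (hρnn : ∀ x : ℝ, 0 ≤ x → 0 ≤ ρ x)
    (hA : 0 < A)
    (hρgrowth : ∀ x : ℝ, 0 ≤ x → ρ x ≤ A * (1 + x))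
    (hg : ∀ t ∈ dbInterval T, ∀ y₁ y₂ : ℝ, |g t y₁ - g t y₂| ≤ u t * ρ |y₁ - y₂|)
    (n : ℕ) :
    ∀ t ∈ dbInterval T, ∀ y : ℝ,
      BddBelow (Set.range fun p : ℝ => g t p + ((n : ℝ) + A) * u t * |p - y|) ∧
      (⨅ p : ℝ, g t p + ((n : ℝ) + A) * u t * |p - y|) ≤ g t y ∧
      (∀ y' : ℝ,
        |(⨅ p : ℝ, g t p + ((n : ℝ) + A) * u t * |p - y|) -
          (⨅ p : ℝ, g t p + ((n : ℝ) + A) * u t * |p - y'|)| ≤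
            ((n : ℝ) + A) * u t * |y - y'|) ∧
      (∀ y' : ℝ,
        |(⨅ p : ℝ, g t p + ((n : ℝ) + A) * u t * |p - y|) -
          (⨅ p : ℝ, g t p + ((n : ℝ) + A) * u t * |p - y'|)| ≤ u t * ρ |y - y'|) := by
  intro t ht y
  have hut : 0 < u t := hu0 t ht
  have hL : 0 ≤ ((n : ℝ) + A) * u t :=
    mul_nonneg (by positivity) hut.le
  have key : ∀ z p : ℝ, g t z - u t * A - A * (u t * |z - p|) ≤ g t p := by
    intro z p
    have h1 : g t z - g t p ≤ u t * ρ |z - p| := le_of_abs_le (hg t ht z p)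
    have h2 : ρ |z - p| ≤ A * (1 + |z - p|) := hρgrowth _ (abs_nonneg _)
    nlinarith [abs_nonneg (z - p), hut.le, mul_le_mul_of_nonneg_left h2 hut.le]
  have hbdd : ∀ z : ℝ,
      BddBelow (Set.range fun p : ℝ => g t p + ((n : ℝ) + A) * u t * |p - z|) := by
    intro z
    refine ⟨g t z - u t * A, ?_⟩
    rintro x ⟨p, rfl⟩
    have hk := key z p
    have habs : |p - z| = |z - p| := abs_sub_comm _ _
    have hn : (0 : ℝ) ≤ (n : ℝ) := Nat.cast_nonneg n
    simp only [habs]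
    nlinarith [abs_nonneg (z - p), hut.le,
      mul_nonneg (mul_nonneg hn hut.le) (abs_nonneg (z - p))]
  -- Lipschitz one-sided bound
  have lip : ∀ z w : ℝ,
      (⨅ p : ℝ, g t p + ((n : ℝ) + A) * u t * |p - z|) ≤
        (⨅ p : ℝ, g t p + ((n : ℝ) + A) * u t * |p - w|) + ((n : ℝ) + A) * u t * |z - w| := by
    intro z w
    rw [← sub_le_iff_le_add]
    refine le_ciInf fun p => ?_
    rw [sub_le_iff_le_add]
    have h1 : (⨅ q : ℝ, g t q + ((n : ℝ) + A) * u t * |q - z|) ≤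
        g t p + ((n : ℝ) + A) * u t * |p - z| := ciInf_le (hbdd z) p
    have h3 : |p - z| ≤ |p - w| + |z - w| := by
      have := abs_sub_le p w z
      have h4 : |w - z| = |z - w| := abs_sub_comm _ _
      linarith
    nlinarith [mul_le_mul_of_nonneg_left h3 hL]
  -- ρ-modulus one-sided bound
  have rhobd : ∀ z w : ℝ,
      (⨅ p : ℝ, g t p + ((n : ℝ) + A) * u t * |p - z|) ≤
        (⨅ p : ℝ, g t p + ((n : ℝ) + A) * u t * |p - w|) + u t * ρ |z - w| := by
    intro z w
    rw [← sub_le_iff_le_add]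
    refine le_ciInf fun p => ?_
    rw [sub_le_iff_le_add]
    have h1 : (⨅ q : ℝ, g t q + ((n : ℝ) + A) * u t * |q - z|) ≤
        g t (p + z - w) + ((n : ℝ) + A) * u t * |p + z - w - z| :=
      ciInf_le (hbdd z) (p + z - w)
    have h2 : g t (p + z - w) - g t p ≤ u t * ρ |p + z - w - p| :=
      le_of_abs_le (hg t ht (p + z - w) p)
    have e1 : p + z - w - z = p - w := by ring
    have e2 : p + z - w - p = z - w := by ring
    rw [e1] at h1
    rw [e2] at h2
    linarith
  refine ⟨hbdd y, ?_, ?_, ?_⟩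
  · have := ciInf_le (hbdd y) y
    simpa using this
  · intro y'
    rw [abs_sub_le_iff]
    constructor
    · have := lip y y'; linarith
    · have := lip y' y
      have h4 : |y' - y| = |y - y'| := abs_sub_comm _ _
      rw [h4] at this
      linarith
  · intro y'
    rw [abs_sub_le_iff]
    constructor
    · have := rhobd y y'; linarith
    · have := rhobd y' y
      have h4 : |y' - y| = |y - y'| := abs_sub_comm _ _
      rw [h4] at this
      linarith
end

section
/- Lower bound and convergence rate of the inf-convolution approximation: in the setting of the previous statement, with gⁿ(t,y) = inf_p { g(t,p) + (n+A) u(t)|p−y| }, the infimum can be restricted to the set where u(t)|p−y| ≤ (2A/n) u(t), and consequently 0 ≤ g(t,y) − gⁿ(t,y) ≤ u(t) ρ(2A/n) for all t and y. In particular if ∫₀ᵀ u(t) dt < ∞ then ∫₀ᵀ sup_y |g(t,y) − gⁿ(t,y)| dt ≤ ρ(2A/n) ∫₀ᵀ u(t) dt → 0 as n → ∞. -/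
open MeasureTheory Filter
open scoped ENNReal

set_option maxHeartbeats 1000000 in
theorem stmt_16 (T : ℝ≥0∞) (hT : 0 < T) (u : ℝ → ℝ) (ρ : ℝ → ℝ) (A : ℝ)
    (g : ℝ → ℝ → ℝ)
    (hu0 : ∀ t ∈ dbInterval T, 0 < u t)
    (huInt : IntegrableOn u (dbInterval T))
    (hρc : ContinuousOn ρ (Set.Ici 0))
    (hρmono : MonotoneOn ρ (Set.Ici (0 : ℝ)))
    (hρ0 : ρ 0 = 0) (hρnn : ∀ x : ℝ, 0 ≤ x → 0 ≤ ρ x)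
    (hA : 0 < A)
    (hρgrowth : ∀ x : ℝ, 0 ≤ x → ρ x ≤ A * (1 + x))
    (hg : ∀ t ∈ dbInterval T, ∀ y₁ y₂ : ℝ, |g t y₁ - g t y₂| ≤ u t * ρ |y₁ - y₂|) :
    (∀ n : ℕ, 0 < n → ∀ t ∈ dbInterval T, ∀ y : ℝ,
      (⨅ p : ℝ, g t p + ((n : ℝ) + A) * u t * |p - y|) =
        (⨅ p : {p : ℝ // |p - y| ≤ 2 * A / (n : ℝ)},
          g t (p : ℝ) + ((n : ℝ) + A) * u t * |(p : ℝ) - y|) ∧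
      0 ≤ g t y - (⨅ p : ℝ, g t p + ((n : ℝ) + A) * u t * |p - y|) ∧
      g t y - (⨅ p : ℝ, g t p + ((n : ℝ) + A) * u t * |p - y|) ≤
        u t * ρ (2 * A / (n : ℝ))) ∧
    Tendsto (fun n : ℕ => ρ (2 * A / (n : ℝ)) * ∫ t in dbInterval T, u t)
      atTop (nhds 0) := by

  constructor
  · intro n hn t ht y
    have hut : 0 < u t := hu0 t ht
    have hn' : (0:ℝ) < (n:ℝ) := by exact_mod_cast hn
    have hbd : (0:ℝ) ≤ 2 * A / (n:ℝ) := by positivity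
    set c : ℝ := ((n : ℝ) + A) * u t with hc
    have hcpos : 0 < c := by positivity
    set f : ℝ → ℝ := fun p => g t p + c * |p - y| with hf
    -- for p far, g t y ≤ f p
    have hfar : ∀ p : ℝ, 2 * A / (n:ℝ) < |p - y| → g t y ≤ f p := by
      intro p hp
      have h1 := hg t ht y p
      have h2 : |y - p| = |p - y| := abs_sub_comm _ _
      rw [h2] at h1
      have h3 := hρgrowth |p - y| (abs_nonneg _)
      have h4 : g t y ≤ g t p + u t * ρ |p - y| := by
        have := abs_le.mp h1
        linarith [this.2]
      have h5 : u t * ρ |p - y| ≤ u t * (A * (1 + |p - y|)) :=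
        mul_le_mul_of_nonneg_left h3 hut.le
      have h6 : (2 * A / (n:ℝ)) * (n:ℝ) = 2 * A := by field_simp
      have h7 : A ≤ (n:ℝ) * |p - y| := by nlinarith
      have h8 : u t * (A * (1 + |p - y|)) ≤ c * |p - y| := by
        rw [hc]; nlinarith
      simp only [hf]; linarith
    -- for p near, f p ≥ g t y - u t * ρ (2A/n)
    have hnear : ∀ p : ℝ, |p - y| ≤ 2 * A / (n:ℝ) →
        g t y - u t * ρ (2 * A / (n:ℝ)) ≤ f p := by
      intro p hp
      have h1 := hg t ht y p
      rw [abs_sub_comm y p] at h1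
      have hmono := hρmono (abs_nonneg (p - y)) hbd hp
      have h4 : g t y ≤ g t p + u t * ρ |p - y| := by
        have := abs_le.mp h1; linarith [this.2]
      have h5 : u t * ρ |p - y| ≤ u t * ρ (2 * A / (n:ℝ)) :=
        mul_le_mul_of_nonneg_left hmono hut.le
      have h6 : 0 ≤ c * |p - y| := by positivity
      simp only [hf]; linarith
    have hkey : ∀ p : ℝ, g t y - u t * ρ (2 * A / (n:ℝ)) ≤ f p := by
      intro p
      rcases le_or_gt (|p - y|) (2 * A / (n:ℝ)) with h | h
      · exact hnear p h
      · have h1 := hfar p h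
        have hρn : 0 ≤ u t * ρ (2 * A / (n:ℝ)) :=
          mul_nonneg hut.le (hρnn _ hbd)
        exact le_trans (sub_le_self _ hρn) h1
    have hbdd : BddBelow (Set.range f) := by
      refine ⟨g t y - u t * ρ (2 * A / (n:ℝ)), ?_⟩
      rintro x ⟨p, rfl⟩; exact hkey p
    have hne : Nonempty {p : ℝ // |p - y| ≤ 2 * A / (n:ℝ)} :=
      ⟨⟨y, by simpa using hbd⟩⟩
    have hfy : f y = g t y := by simp [hf]
    have hle_fy : (⨅ p : ℝ, f p) ≤ g t y := hfy ▸ ciInf_le hbdd y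
    have hge : g t y - u t * ρ (2 * A / (n:ℝ)) ≤ ⨅ p : ℝ, f p := le_ciInf hkey
    have hbdd2 : BddBelow (Set.range fun p : {p : ℝ // |p - y| ≤ 2 * A / (n:ℝ)} => f p) := by
      refine ⟨g t y - u t * ρ (2 * A / (n:ℝ)), ?_⟩
      rintro x ⟨p, rfl⟩; exact hkey p
    refine ⟨le_antisymm ?_ ?_, by linarith, by linarith⟩
    · exact le_ciInf fun p => ciInf_le hbdd p.1
    · refine le_ciInf fun p => ?_
      rcases le_or_gt (|p - y|) (2 * A / (n:ℝ)) with h | h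
      · exact ciInf_le hbdd2 ⟨p, h⟩
      · calc (⨅ q : {q : ℝ // |q - y| ≤ 2 * A / (n:ℝ)}, f q)
            ≤ f (⟨y, by simpa using hbd⟩ : {q : ℝ // |q - y| ≤ 2 * A / (n:ℝ)}) :=
              ciInf_le hbdd2 _
          _ = g t y := hfy
          _ ≤ f p := hfar p h
  · have h1 : Tendsto (fun n : ℕ => 2 * A / (n:ℝ)) atTop (nhdsWithin 0 (Set.Ici 0)) := by
      apply tendsto_nhdsWithin_of_tendsto_nhds_of_eventually_within
      · simpa using Tendsto.div_atTop (tendsto_const_nhds) tendsto_natCast_atTop_atTop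
      · filter_upwards with n
        have h0 : (0:ℝ) ≤ (n:ℝ) := Nat.cast_nonneg n
        simp only [Set.mem_Ici]
        positivity
    have h2 : Tendsto (fun n : ℕ => ρ (2 * A / (n:ℝ))) atTop (nhds 0) := by
      have := (hρc 0 (Set.self_mem_Ici)).tendsto.comp h1
      simpa [hρ0, Function.comp_def] using this
    simpa using h2.mul_const _
end
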